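/- arXiv:2504.02974 — 8 statements merged into one kernel-verified Lean document; each statement's English description precedes it below -/
import Mathlib

section
/- Let X = ℝ, σ > 0, and let P be the set of probability measures on ℝ with mean 0 and second moment at most σ². For real numbers α, β with σ²α² + (2β - 1)² ≤ 1, the function e(x) = 1 + αx + β(x²/σ² - 1) is nonnegative for all x ∈ ℝ and satisfies ∫ e dμ ≤ 1 for every μ ∈ P. -/
open MeasureTheory
open scoped ENNReal

/-- For the class of zero-mean distributions with second moment at most `σ²`, every function
`e(x) = 1 + αx + β(x²/σ² - 1)` with `σ²α² + (2β - 1)² ≤ 1` is nonnegative and is an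
e-variable. -/
theorem stmt_2 (σ : ℝ) (hσ : 0 < σ) (α β : ℝ)
    (hαβ : σ ^ 2 * α ^ 2 + (2 * β - 1) ^ 2 ≤ 1) :
    (∀ x : ℝ, 0 ≤ 1 + α * x + β * (x ^ 2 / σ ^ 2 - 1)) ∧
    ∀ μ : Measure ℝ, IsProbabilityMeasure μ →
      Integrable (fun x : ℝ => x) μ → (∫ x, x ∂μ) = 0 →
      Integrable (fun x : ℝ => x ^ 2) μ → (∫ x, x ^ 2 ∂μ) ≤ σ ^ 2 →
      ∫ x, (1 + α * x + β * (x ^ 2 / σ ^ 2 - 1)) ∂μ ≤ 1 := by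
  have hσ2 : (0:ℝ) < σ ^ 2 := by positivity
  have hβ0 : (0:ℝ) ≤ β := by nlinarith [sq_nonneg (σ * α)]
  have hβ1 : β ≤ 1 := by nlinarith [sq_nonneg (σ * α)]
  constructor
  · intro x
    rcases eq_or_lt_of_le hβ0 with h | h
    · have hα : α = 0 := by
        have h1 : σ ^ 2 * α ^ 2 = 0 := le_antisymm (by nlinarith) (by positivity)
        have h2 : α ^ 2 = 0 := by
          rcases mul_eq_zero.mp h1 with h | h
          · exact absurd h (by positivity)
          · exact h
        exact pow_eq_zero_iff (n := 2) (by norm_num) |>.mp h2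
      rw [hα, ← h]
      simp
    · have key : 0 ≤ (2 * β * x + α * σ ^ 2) ^ 2 + (4 * β * (1 - β) * σ ^ 2 - σ ^ 4 * α ^ 2) := by
        nlinarith [sq_nonneg (2 * β * x + α * σ ^ 2)]
      have : 0 ≤ σ ^ 2 * (1 + α * x + β * (x ^ 2 / σ ^ 2 - 1)) := by
        have hx2 : β * (x ^ 2 / σ ^ 2) * σ ^ 2 = β * x ^ 2 := by
          field_simp
        nlinarith [key, mul_pos h hσ2]
      nlinarith [this]
  · intro μ hμ hx hmean hx2 hvar
    have heq : (fun x : ℝ => 1 + α * x + β * (x ^ 2 / σ ^ 2 - 1))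
        = fun x : ℝ => ((1 - β) + α * x) + (β / σ ^ 2) * x ^ 2 := by
      funext x
      field_simp
      ring
    rw [heq]
    have hint1 : Integrable (fun x : ℝ => (1 - β) + α * x) μ :=
      (integrable_const _).add (hx.const_mul α)
    rw [integral_add hint1 (hx2.const_mul (β / σ ^ 2)),
      integral_add (integrable_const _) (hx.const_mul α),
      integral_const_mul, integral_const_mul, hmean, integral_const]
    simp only [measure_univ, probReal_univ, ENNReal.toReal_one, smul_eq_mul, mul_one, mul_zero, add_zero]
    have h2 : β / σ ^ 2 * ∫ x, x ^ 2 ∂μ ≤ β / σ ^ 2 * σ ^ 2 :=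
      mul_le_mul_of_nonneg_left hvar (by positivity)
    have h3 : β / σ ^ 2 * σ ^ 2 = β := by field_simp
    linarith
end

section
/- Every sub-ψ distribution is concentrated on dom(ψ*): if μ is a probability measure on ℝ with ∫ e^{λx} μ(dx) ≤ e^{ψ(λ)} for all λ ∈ dom(ψ), then μ(dom(ψ*)) = 1, where dom(ψ*) = {x : ψ*(x) < ∞}. -/
open MeasureTheory
open scoped ENNReal

/-- Every sub-`ψ` distribution is concentrated on the effective domain of the convex
conjugate `ψ*`: if `∫ e^{λx} μ(dx) ≤ e^{ψ(λ)}` for all `λ` in the domain of `ψ`, then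
`μ({x : ψ*(x) < ∞}) = 1`. -/
theorem stmt_8 (ψ : ℝ → ℝ≥0∞) (hψ0 : ψ 0 = 0)
    (hneg : ∀ l : ℝ, l < 0 → ψ l = ⊤)
    (hitv : ∀ l₁ l₂ : ℝ, 0 ≤ l₁ → l₁ ≤ l₂ → ψ l₂ ≠ ⊤ → ψ l₁ ≠ ⊤)
    (hpos : ∃ l : ℝ, 0 < l ∧ ψ l ≠ ⊤)
    (hconv : ∀ a b t : ℝ, 0 ≤ t → t ≤ 1 →
      ψ (t * a + (1 - t) * b) ≤ ENNReal.ofReal t * ψ a + ENNReal.ofReal (1 - t) * ψ b)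
    (μ : Measure ℝ) [IsProbabilityMeasure μ]
    (hsub : ∀ l : ℝ, ψ l ≠ ⊤ →
      ∫⁻ x, ENNReal.ofReal (Real.exp (l * x)) ∂μ ≤ ENNReal.ofReal (Real.exp ((ψ l).toReal))) :
    μ {x : ℝ | (⨆ l : ℝ, (((l * x : ℝ)) : EReal) - ((ψ l : ℝ≥0∞) : EReal)) ≠ ⊤} = 1 := by
  set f : ℝ → EReal := fun x => ⨆ l : ℝ, (((l * x : ℝ)) : EReal) - ((ψ l : ℝ≥0∞) : EReal) with hfdef
  set A : Set ℝ := {x | f x = ⊤} with hAdef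
  have key : ∀ y : ℝ, y ∈ A → μ (Set.Ici y) = 0 := by
    intro y hy
    have hbound : ∀ n : ℕ, μ (Set.Ici y) ≤ ENNReal.ofReal (Real.exp (-(n:ℝ))) := by
      intro n
      have h1 : (((n:ℝ)) : EReal) < f y := by
        rw [hAdef] at hy; rw [Set.mem_setOf_eq] at hy; rw [hy]; exact EReal.coe_lt_top _
      rw [hfdef] at h1
      obtain ⟨l, hl⟩ := lt_iSup_iff.mp h1
      have hψl : ψ l ≠ ⊤ := by
        intro h
        rw [h] at hl
        simp at hl
      have hne1 : ((ψ l : ℝ≥0∞) : EReal) ≠ ⊤ := by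
        simpa using hψl
      have hne2 : ((ψ l : ℝ≥0∞) : EReal) ≠ ⊥ := by
        simp
      have hcoe : (((ψ l).toReal : ℝ) : EReal) = ((ψ l : ℝ≥0∞) : EReal) := by
        rw [← EReal.toReal_coe_ennreal]; exact EReal.coe_toReal hne1 hne2
      rw [← hcoe] at hl
      have hl' : (n : ℝ) < l * y - (ψ l).toReal := by exact_mod_cast hl
      have hl0 : 0 ≤ l := by
        by_contra h
        exact hψl (hneg l (lt_of_not_ge h))
      have hlpos : 0 < l := by
        rcases lt_or_eq_of_le hl0 with h | h
        · exact h
        · exfalso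
          rw [← h, hψ0] at hl'
          have : (0:ℝ) ≤ n := Nat.cast_nonneg n
          simp at hl'
          linarith
      have hmeas : Measurable fun x : ℝ => ENNReal.ofReal (Real.exp (l * x)) :=
        (Real.measurable_exp.comp (measurable_const_mul l)).ennreal_ofReal
      have hsubset : Set.Ici y ⊆ {x | ENNReal.ofReal (Real.exp (l * y)) ≤ ENNReal.ofReal (Real.exp (l * x))} := by
        intro x hx
        exact ENNReal.ofReal_le_ofReal (Real.exp_le_exp.mpr (mul_le_mul_of_nonneg_left hx hl0))
      have hmarkov : μ {x | ENNReal.ofReal (Real.exp (l * y)) ≤ ENNReal.ofReal (Real.exp (l * x))}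
          ≤ (∫⁻ x, ENNReal.ofReal (Real.exp (l * x)) ∂μ) / ENNReal.ofReal (Real.exp (l * y)) :=
        meas_ge_le_lintegral_div hmeas.aemeasurable (by simp [Real.exp_pos]) (by simp)
      calc μ (Set.Ici y) ≤ μ {x | ENNReal.ofReal (Real.exp (l * y)) ≤ ENNReal.ofReal (Real.exp (l * x))} :=
            measure_mono hsubset
        _ ≤ (∫⁻ x, ENNReal.ofReal (Real.exp (l * x)) ∂μ) / ENNReal.ofReal (Real.exp (l * y)) := hmarkov
        _ ≤ ENNReal.ofReal (Real.exp ((ψ l).toReal)) / ENNReal.ofReal (Real.exp (l * y)) :=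
            ENNReal.div_le_div_right (hsub l hψl) _
        _ = ENNReal.ofReal (Real.exp ((ψ l).toReal) / Real.exp (l * y)) :=
            (ENNReal.ofReal_div_of_pos (Real.exp_pos _)).symm
        _ = ENNReal.ofReal (Real.exp ((ψ l).toReal - l * y)) := by rw [Real.exp_sub]
        _ ≤ ENNReal.ofReal (Real.exp (-(n:ℝ))) :=
            ENNReal.ofReal_le_ofReal (Real.exp_le_exp.mpr (by linarith))
    have htend : Filter.Tendsto (fun n : ℕ => ENNReal.ofReal (Real.exp (-(n:ℝ)))) Filter.atTop (nhds 0) := by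
      have h1 : Filter.Tendsto (fun n : ℕ => -(n:ℝ)) Filter.atTop Filter.atBot :=
        Filter.tendsto_neg_atBot_iff.mpr tendsto_natCast_atTop_atTop
      simpa using ENNReal.tendsto_ofReal (Real.tendsto_exp_atBot.comp h1)
    exact le_antisymm (ge_of_tendsto' htend hbound) zero_le
  have hApos : ∀ x ∈ A, 0 < x := by
    intro x hx
    by_contra h
    push_neg at h
    have hle : f x ≤ 0 := by
      rw [hfdef]
      apply iSup_le
      intro l
      by_cases hψl : ψ l = ⊤
      · rw [hψl]
        simp
      · have hl0 : 0 ≤ l := by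
          by_contra hh
          exact hψl (hneg l (lt_of_not_ge hh))
        have h1 : ((l * x : ℝ) : EReal) ≤ (0 : EReal) := by
          have : l * x ≤ 0 := mul_nonpos_of_nonneg_of_nonpos hl0 h
          exact_mod_cast this
        calc ((l * x : ℝ) : EReal) - ((ψ l : ℝ≥0∞) : EReal)
            ≤ ((l * x : ℝ) : EReal) - 0 := EReal.sub_le_sub le_rfl (EReal.coe_ennreal_nonneg _)
          _ ≤ 0 := by rw [sub_zero]; exact h1
    rw [hAdef, Set.mem_setOf_eq] at hx
    rw [hx] at hle
    simp at hle
  have hA0 : μ A = 0 := by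
    rcases Set.eq_empty_or_nonempty A with hAe | hAne
    · rw [hAe]; exact measure_empty
    · have hbdd : BddBelow A := ⟨0, fun x hx => (hApos x hx).le⟩
      set c := sInf A with hc
      by_cases hcA : c ∈ A
      · exact measure_mono_null (fun y hy => csInf_le hbdd hy) (key c hcA)
      · have hyn : ∀ n : ℕ, ∃ y ∈ A, y < c + 1/(n+1) := by
          intro n
          apply exists_lt_of_csInf_lt hAne
          rw [← hc]
          have : (0:ℝ) < 1/((n:ℝ)+1) := by positivity
          linarith
        choose yseq hymem hylt using hyn
        have hcover : A ⊆ ⋃ n : ℕ, Set.Ici (yseq n) := by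
          intro y hy
          have hyc : c < y := lt_of_le_of_ne (csInf_le hbdd hy) (by rintro rfl; exact hcA hy)
          obtain ⟨n, hn⟩ := exists_nat_one_div_lt (show (0:ℝ) < y - c by linarith)
          refine Set.mem_iUnion.mpr ⟨n, ?_⟩
          have h2 := hylt n
          simp only [Set.mem_Ici]
          linarith
        exact measure_mono_null hcover (measure_iUnion_null fun n => key _ (hymem n))
  have h1 : (1:ℝ≥0∞) ≤ μ {x : ℝ | f x ≠ ⊤} := by
    have hsum : μ (A ∪ {x : ℝ | f x ≠ ⊤}) ≤ μ A + μ {x : ℝ | f x ≠ ⊤} := measure_union_le _ _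
    have huniv : A ∪ {x : ℝ | f x ≠ ⊤} = Set.univ := by
      rw [hAdef]
      ext x
      simp [em]
    rw [huniv, measure_univ, hA0, zero_add] at hsum
    exact hsum
  exact le_antisymm prob_le_one h1
end

section
/- For every x₀ in dom(ψ*) there exists y₀ ≥ 0 such that for any p ∈ [0, (1/2)e^{-ψ*(x₀)}] and y ≥ y₀, the probability measure ν = p·δ_{x₀} + (1-p)·δ_{-x₀-y} satisfies ∫ e^{λx} ν(dx) ≤ e^{ψ(λ)} for all λ ∈ dom(ψ). -/
open MeasureTheory
open scoped ENNReal

private lemma real_key (p x₀ c B S l : ℝ) (hp : 0 ≤ p)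
    (hpe : p ≤ (1 / 2) * Real.exp (-S)) (hS : 0 ≤ S) (hB : 0 ≤ B)
    (hx : l * x₀ ≤ S + B) (hc : 4 * |x₀| + 1 ≤ c) (hl : 0 ≤ l) :
    p * Real.exp (l * x₀) + (1 - p) * Real.exp (-(l * c)) ≤ Real.exp B := by
  have hexpS : Real.exp (-S) ≤ 1 := Real.exp_le_one_iff.mpr (by linarith)
  have hp2 : p ≤ 1 / 2 := by nlinarith
  have h1B : 1 ≤ Real.exp B := Real.one_le_exp hB
  have hc0 : 0 < c := by nlinarith [abs_nonneg x₀]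
  by_cases hcase : Real.log 2 ≤ l * c
  · -- tail regime
    have e1 : Real.exp (-(l * c)) ≤ 1 / 2 := by
      have h1 : Real.exp (-(l * c)) ≤ Real.exp (-(Real.log 2)) :=
        Real.exp_le_exp.mpr (by linarith)
      have h2 : Real.exp (-(Real.log 2)) = 1 / 2 := by
        rw [Real.exp_neg, Real.exp_log (by norm_num : (0:ℝ) < 2)]
        norm_num
      linarith
    have e2 : p * Real.exp (l * x₀) ≤ (1 / 2) * Real.exp B := by
      calc p * Real.exp (l * x₀) ≤ ((1 / 2) * Real.exp (-S)) * Real.exp (S + B) :=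
            mul_le_mul hpe (Real.exp_le_exp.mpr hx) (Real.exp_nonneg _) (by positivity)
        _ = (1 / 2) * Real.exp B := by
            rw [mul_assoc, ← Real.exp_add]; ring_nf
    have e3 : (1 - p) * Real.exp (-(l * c)) ≤ 1 / 2 := by
      nlinarith [Real.exp_nonneg (-(l * c))]
    linarith
  · -- small-l regime
    push_neg at hcase
    have hlc0 : 0 ≤ l * c := mul_nonneg hl hc0.le
    have hlog : Real.log 2 < 0.6931471808 := Real.log_two_lt_d9
    have hlc1 : l * c ≤ 1 := by linarith
    have habs : |x₀| ≤ c := by nlinarith [abs_nonneg x₀]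
    have hx1 : l * x₀ ≤ l * |x₀| := mul_le_mul_of_nonneg_left (le_abs_self _) hl
    have hx2 : l * |x₀| ≤ l * c := mul_le_mul_of_nonneg_left habs hl
    have hx0nn : 0 ≤ l * |x₀| := mul_nonneg hl (abs_nonneg _)
    have e2 : Real.exp (-(l * c)) ≤ 1 - (l * c) / 2 := by
      have h1 : (l * c) + 1 ≤ Real.exp (l * c) := Real.add_one_le_exp _
      have h2 : Real.exp (-(l * c)) = (Real.exp (l * c))⁻¹ := Real.exp_neg _
      rw [h2]
      rw [inv_le_iff_one_le_mul₀ (Real.exp_pos _)]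
      nlinarith [Real.exp_pos (l * c)]
    have hexp2 : Real.exp (l * x₀) ≤ 2 := by
      calc Real.exp (l * x₀) ≤ Real.exp (Real.log 2) :=
            Real.exp_le_exp.mpr (by linarith)
        _ = 2 := Real.exp_log (by norm_num)
    have h3 : Real.exp (l * x₀) - 1 ≤ (l * x₀) * Real.exp (l * x₀) := by
      have h := Real.add_one_le_exp (-(l * x₀))
      have hmul : Real.exp (-(l * x₀)) * Real.exp (l * x₀) = 1 := by
        rw [← Real.exp_add]; simp
      nlinarith [Real.exp_pos (l * x₀), Real.exp_pos (-(l * x₀))]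
    have h4 : (l * x₀) * Real.exp (l * x₀) ≤ (l * |x₀|) * 2 := by
      rcases le_or_gt 0 (l * x₀) with h | h
      · nlinarith [Real.exp_pos (l * x₀)]
      · nlinarith [Real.exp_pos (l * x₀)]
    have e1 : Real.exp (l * x₀) ≤ 1 + 2 * (l * |x₀|) := by linarith
    -- combine
    have key : 2 * p * |x₀| ≤ (1 - p) * c / 2 := by nlinarith [abs_nonneg x₀]
    have t1 : p * Real.exp (l * x₀) ≤ p * (1 + 2 * (l * |x₀|)) :=
      mul_le_mul_of_nonneg_left e1 hp
    have t2 : (1 - p) * Real.exp (-(l * c)) ≤ (1 - p) * (1 - (l * c) / 2) :=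
      mul_le_mul_of_nonneg_left e2 (by linarith)
    have key2 : l * (2 * p * |x₀|) ≤ l * ((1 - p) * c / 2) :=
      mul_le_mul_of_nonneg_left key hl
    have expand1 : p * (1 + 2 * (l * |x₀|)) = p + l * (2 * p * |x₀|) := by ring
    have expand2 : (1 - p) * (1 - (l * c) / 2) = (1 - p) - l * ((1 - p) * c / 2) := by
      ring
    linarith only [t1, t2, key2, expand1, expand2, h1B]

/-- For every `x₀ ∈ dom(ψ*)` there exists `y₀ ≥ 0` such that for all
`p ∈ [0, (1/2)e^{-ψ*(x₀)}]` and `y ≥ y₀`, the two-point measure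
`ν = p·δ_{x₀} + (1-p)·δ_{-x₀-y}` is sub-`ψ`. -/
theorem stmt_10 (ψ : ℝ → ℝ≥0∞) (hψ0 : ψ 0 = 0)
    (hneg : ∀ l : ℝ, l < 0 → ψ l = ⊤)
    (hitv : ∀ l₁ l₂ : ℝ, 0 ≤ l₁ → l₁ ≤ l₂ → ψ l₂ ≠ ⊤ → ψ l₁ ≠ ⊤)
    (hpos : ∃ l : ℝ, 0 < l ∧ ψ l ≠ ⊤)
    (hconv : ∀ a b t : ℝ, 0 ≤ t → t ≤ 1 →
      ψ (t * a + (1 - t) * b) ≤ ENNReal.ofReal t * ψ a + ENNReal.ofReal (1 - t) * ψ b)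
    (x₀ : ℝ)
    (hx₀ : (⨆ l : ℝ, (((l * x₀ : ℝ)) : EReal) - ((ψ l : ℝ≥0∞) : EReal)) ≠ ⊤) :
    ∃ y₀ : ℝ, 0 ≤ y₀ ∧ ∀ p : ℝ, 0 ≤ p →
      p ≤ (1 / 2) * Real.exp
        (-(⨆ l : ℝ, (((l * x₀ : ℝ)) : EReal) - ((ψ l : ℝ≥0∞) : EReal)).toReal) →
      ∀ y : ℝ, y₀ ≤ y → ∀ l : ℝ, ψ l ≠ ⊤ →
        ∫⁻ x, ENNReal.ofReal (Real.exp (l * x))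
          ∂(ENNReal.ofReal p • Measure.dirac x₀
            + ENNReal.ofReal (1 - p) • Measure.dirac (-x₀ - y))
          ≤ ENNReal.ofReal (Real.exp ((ψ l).toReal)) := by
  set T : EReal := ⨆ l : ℝ, (((l * x₀ : ℝ)) : EReal) - ((ψ l : ℝ≥0∞) : EReal) with hTdef
  have hT0 : (0 : EReal) ≤ T := by
    have h := le_iSup (fun l : ℝ => (((l * x₀ : ℝ)) : EReal) - ((ψ l : ℝ≥0∞) : EReal)) 0
    simpa [hψ0, hTdef] using h
  have hS0 : 0 ≤ T.toReal := by
    have h := EReal.toReal_le_toReal hT0 (by simp) hx₀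
    simpa using h
  have key : ∀ l : ℝ, ψ l ≠ ⊤ → l * x₀ ≤ T.toReal + (ψ l).toReal := by
    intro l hl
    have h1 : (((l * x₀ : ℝ)) : EReal) - ((ψ l : ℝ≥0∞) : EReal) ≤ T := by
      rw [hTdef]
      exact le_iSup (fun l : ℝ => (((l * x₀ : ℝ)) : EReal) - ((ψ l : ℝ≥0∞) : EReal)) l
    have hcoe : ((ψ l : ℝ≥0∞) : EReal) = (((ψ l).toReal : ℝ) : EReal) := by
      rw [← ENNReal.ofReal_toReal hl]
      simp [EReal.coe_ennreal_ofReal, ENNReal.toReal_nonneg]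
    rw [hcoe, ← EReal.coe_sub] at h1
    have h2 : T ≤ ((T.toReal : ℝ) : EReal) := EReal.le_coe_toReal hx₀
    have h3 := le_trans h1 h2
    rw [EReal.coe_le_coe_iff] at h3
    linarith
  refine ⟨max 0 (4 * |x₀| + 1 - x₀), le_max_left _ _, ?_⟩
  intro p hp hpe y hy l hl
  have hl0 : 0 ≤ l := by
    by_contra h
    exact hl (hneg l (by linarith [not_le.mp h]))
  have hc : 4 * |x₀| + 1 ≤ x₀ + y := by
    have := le_trans (le_max_right 0 (4 * |x₀| + 1 - x₀)) hy
    linarith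
  have hp2 : p ≤ 1 / 2 := by
    have : Real.exp (-T.toReal) ≤ 1 := Real.exp_le_one_iff.mpr (by linarith)
    nlinarith
  rw [lintegral_add_measure, lintegral_smul_measure, lintegral_smul_measure,
    lintegral_dirac, lintegral_dirac, smul_eq_mul, smul_eq_mul,
    ← ENNReal.ofReal_mul hp, ← ENNReal.ofReal_mul (by linarith : (0:ℝ) ≤ 1 - p),
    ← ENNReal.ofReal_add (mul_nonneg hp (Real.exp_nonneg _))
      (mul_nonneg (by linarith) (Real.exp_nonneg _))]
  apply ENNReal.ofReal_le_ofReal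
  have hrw : l * (-x₀ - y) = -(l * (x₀ + y)) := by ring
  rw [hrw]
  exact real_key p x₀ (x₀ + y) (ψ l).toReal T.toReal l hp hpe hS0
    ENNReal.toReal_nonneg (key l hl) hc hl0
end

section
/- Let P be the set of sub-ψ probability measures on dom(ψ*). If f is a measurable function on dom(ψ*) with sup_x |f(x)|e^{-ψ*(x)} = ∞, then there exists μ ∈ P with ∫ |f| dμ = ∞. Equivalently, every function integrable under all sub-ψ distributions satisfies sup_x |f(x)|e^{-ψ*(x)} < ∞. -/
open MeasureTheory
open scoped ENNReal

private lemma geo_half (k : ℕ) : ∑' n : ℕ, ((2:ℝ≥0∞)⁻¹)^(n+k) = 2 * 2⁻¹^k := by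
  simp only [pow_add]
  rw [ENNReal.tsum_mul_right, ENNReal.tsum_geometric, ENNReal.one_sub_inv_two]
  simp

private lemma ofReal_half_pow (k : ℕ) :
    ENNReal.ofReal ((1/2:ℝ)^k) = ((2:ℝ≥0∞)⁻¹)^k := by
  rw [ENNReal.ofReal_pow (by norm_num)]
  congr 1
  rw [one_div, ENNReal.ofReal_inv_of_pos (by norm_num)]
  norm_num

private lemma inv8 : ((8:ℝ≥0∞))⁻¹ = ENNReal.ofReal ((8:ℝ)⁻¹) := by
  rw [ENNReal.ofReal_inv_of_pos (by norm_num)]; norm_num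
private lemma inv4 : ((4:ℝ≥0∞))⁻¹ = ENNReal.ofReal ((4:ℝ)⁻¹) := by
  rw [ENNReal.ofReal_inv_of_pos (by norm_num)]; norm_num
private lemma inv2 : ((2:ℝ≥0∞))⁻¹ = ENNReal.ofReal ((2:ℝ)⁻¹) := by
  rw [ENNReal.ofReal_inv_of_pos (by norm_num)]; norm_num

private lemma two_inv_pow3 : (2:ℝ≥0∞) * 2⁻¹^3 = 4⁻¹ := by
  rw [pow_succ', ← mul_assoc, ENNReal.mul_inv_cancel (by norm_num) (by norm_num), one_mul,
    ← ENNReal.inv_pow]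
  norm_num

private lemma arith1 (E : ℝ≥0∞) (hE : 1 ≤ E) : 8⁻¹*E + 4⁻¹ + 2⁻¹ ≤ E := by
  have h4 : (4⁻¹:ℝ≥0∞) ≤ 4⁻¹ * E := le_mul_of_one_le_right (by simp) hE
  have h2 : (2⁻¹:ℝ≥0∞) ≤ 2⁻¹ * E := le_mul_of_one_le_right (by simp) hE
  calc 8⁻¹*E + 4⁻¹ + 2⁻¹ ≤ 8⁻¹*E + 4⁻¹*E + 2⁻¹*E := by
        exact add_le_add (add_le_add le_rfl h4) h2
  _ ≤ (8⁻¹ + 4⁻¹ + 2⁻¹) * E := by rw [add_mul, add_mul]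
  _ ≤ 1 * E := by
        refine mul_le_mul_left ?_ E
        rw [inv8, inv4, inv2, ← ENNReal.ofReal_add (by norm_num) (by norm_num),
          ← ENNReal.ofReal_add (by norm_num) (by norm_num), ← ENNReal.ofReal_one]
        exact ENNReal.ofReal_le_ofReal (by norm_num)
  _ = E := one_mul E

private lemma eighth_quarter : ((8:ℝ≥0∞))⁻¹ + 4⁻¹ ≤ 2⁻¹ := by
  rw [inv8, inv4, inv2, ← ENNReal.ofReal_add (by norm_num) (by norm_num)]
  exact ENNReal.ofReal_le_ofReal (by norm_num)

private lemma sup_nonneg (ψ : ℝ → ℝ≥0∞) (hψ0 : ψ 0 = 0) (x : ℝ) :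
    (0:EReal) ≤ ⨆ l : ℝ, (((l * x : ℝ)) : EReal) - ((ψ l : ℝ≥0∞) : EReal) := by
  have h := le_iSup (fun l : ℝ => (((l * x : ℝ)) : EReal) - ((ψ l : ℝ≥0∞) : EReal)) 0
  simpa [hψ0] using h

private lemma sup_nonpos (ψ : ℝ → ℝ≥0∞) (hneg : ∀ l : ℝ, l < 0 → ψ l = ⊤)
    (x : ℝ) (hx : x ≤ 0) :
    (⨆ l : ℝ, (((l * x : ℝ)) : EReal) - ((ψ l : ℝ≥0∞) : EReal)) ≤ 0 := by
  refine iSup_le fun l => ?_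
  by_cases hl : ψ l = ⊤
  · simp [hl]
  · have hl0 : (0:ℝ) ≤ l := le_of_not_gt fun h => hl (hneg l h)
    have h1 : ((l * x : ℝ) : EReal) ≤ 0 := by
      exact_mod_cast mul_nonpos_of_nonneg_of_nonpos hl0 hx
    calc ((l*x:ℝ):EReal) - ((ψ l : ℝ≥0∞) : EReal) ≤ ((l*x:ℝ):EReal) - 0 :=
          EReal.sub_le_sub le_rfl (EReal.coe_ennreal_nonneg _)
    _ ≤ 0 := by rw [sub_zero]; exact h1

private lemma sup_key (ψ : ℝ → ℝ≥0∞) (hψ0 : ψ 0 = 0) (x l : ℝ) (hl : ψ l ≠ ⊤)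
    (hx : (⨆ l : ℝ, (((l * x : ℝ)) : EReal) - ((ψ l : ℝ≥0∞) : EReal)) ≠ ⊤) :
    l * x - (ψ l).toReal ≤ (⨆ l : ℝ, (((l * x : ℝ)) : EReal) - ((ψ l : ℝ≥0∞) : EReal)).toReal := by
  set S := ⨆ l : ℝ, (((l * x : ℝ)) : EReal) - ((ψ l : ℝ≥0∞) : EReal) with hS
  have h1 : (((l * x : ℝ)) : EReal) - ((ψ l : ℝ≥0∞) : EReal) ≤ S :=
    le_iSup (fun l : ℝ => (((l * x : ℝ)) : EReal) - ((ψ l : ℝ≥0∞) : EReal)) l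
  have h2 : ((ψ l : ℝ≥0∞) : EReal) = (((ψ l).toReal : ℝ) : EReal) := by
    rw [← EReal.toReal_coe_ennreal (x := ψ l), EReal.coe_toReal]
    · simp [hl]
    · exact EReal.coe_ennreal_ne_bot _
  rw [h2, ← EReal.coe_sub] at h1
  have hb : S ≠ ⊥ := by
    intro hbot
    have h0 := sup_nonneg ψ hψ0 x
    rw [← hS, hbot] at h0
    exact absurd h0 (by simp)
  rw [← EReal.coe_toReal hx hb] at h1
  exact_mod_cast h1

/-- If a measurable `f` satisfies `sup_{x ∈ dom ψ*} |f(x)| e^{-ψ*(x)} = ∞`, then there is a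
sub-`ψ` probability measure `μ` (concentrated on `dom ψ*`) with `∫ |f| dμ = ∞`. -/
theorem stmt_11 (ψ : ℝ → ℝ≥0∞) (hψ0 : ψ 0 = 0)
    (hneg : ∀ l : ℝ, l < 0 → ψ l = ⊤)
    (hitv : ∀ l₁ l₂ : ℝ, 0 ≤ l₁ → l₁ ≤ l₂ → ψ l₂ ≠ ⊤ → ψ l₁ ≠ ⊤)
    (hpos : ∃ l : ℝ, 0 < l ∧ ψ l ≠ ⊤)
    (hconv : ∀ a b t : ℝ, 0 ≤ t → t ≤ 1 →
      ψ (t * a + (1 - t) * b) ≤ ENNReal.ofReal t * ψ a + ENNReal.ofReal (1 - t) * ψ b)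
    (f : ℝ → ℝ) (hf : Measurable f)
    (hunbdd : ∀ C : ℝ, ∃ x : ℝ,
      (⨆ l : ℝ, (((l * x : ℝ)) : EReal) - ((ψ l : ℝ≥0∞) : EReal)) ≠ ⊤ ∧
      C ≤ |f x| * Real.exp
        (-(⨆ l : ℝ, (((l * x : ℝ)) : EReal) - ((ψ l : ℝ≥0∞) : EReal)).toReal)) :
    ∃ μ : Measure ℝ, IsProbabilityMeasure μ ∧
      (∀ l : ℝ, ψ l ≠ ⊤ →
        ∫⁻ x, ENNReal.ofReal (Real.exp (l * x)) ∂μ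
          ≤ ENNReal.ofReal (Real.exp ((ψ l).toReal))) ∧
      μ {x : ℝ | (⨆ l : ℝ, (((l * x : ℝ)) : EReal) - ((ψ l : ℝ≥0∞) : EReal)) = ⊤} = 0 ∧
      ∫⁻ x, ENNReal.ofReal |f x| ∂μ = ⊤ := by
  classical
  obtain ⟨l₀, hl₀pos, hl₀fin⟩ := hpos
  set F : ℝ → EReal :=
    fun z => ⨆ l : ℝ, (((l * z : ℝ)) : EReal) - ((ψ l : ℝ≥0∞) : EReal) with hFdef
  set g : ℝ → ℝ := fun z => (F z).toReal with hgdef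
  have hsel : ∀ n : ℕ, ∃ z : ℝ, F z ≠ ⊤ ∧
      (16 * Real.exp ((ψ l₀).toReal) * 2^n : ℝ) ≤ |f z| * Real.exp (-(g z)) :=
    fun n => hunbdd _
  choose x hxtop hxbig using hsel
  have hgx0 : ∀ n, 0 ≤ g (x n) := by
    intro n
    have h : (0:EReal) ≤ F (x n) := sup_nonneg ψ hψ0 (x n)
    have := EReal.toReal_le_toReal h (by simp) (hxtop n)
    simpa using this
  -- constants
  set ε : ℝ := Real.exp (-(ψ l₀).toReal) / 8 with hεdef
  have hεpos : 0 < ε := by rw [hεdef]; positivity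
  have hεle : ε ≤ 1/8 := by
    rw [hεdef]
    have h1 : Real.exp (-(ψ l₀).toReal) ≤ 1 :=
      Real.exp_le_one_iff.mpr (by simp [ENNReal.toReal_nonneg])
    linarith
  set a : ℕ → ℝ := fun n => ε * (1/2)^(n+1) * Real.exp (-(g (x n))) with hadef
  have ha_nonneg : ∀ n, 0 ≤ a n := fun n => by rw [hadef]; positivity
  set b : ℕ → ℝ := fun n => ((1:ℝ)/2)^(n+2) with hbdef
  have hb_nonneg : ∀ n, 0 ≤ b n := fun n => by rw [hbdef]; positivity
  set y : ℕ → ℝ := fun n => -((n:ℝ)+1) / l₀ with hydef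
  have hy0 : ∀ n, y n ≤ 0 := by
    intro n
    rw [hydef]
    simp only
    rw [neg_div]
    have h : (0:ℝ) ≤ ((n:ℝ)+1) / l₀ := by positivity
    linarith
  have hl₀y : ∀ n, l₀ * y n = -((n:ℝ)+1) := by
    intro n
    rw [hydef]
    field_simp
  -- masses
  set A : ℝ≥0∞ := ∑' n, ENNReal.ofReal (a n) with hAdef
  set B : ℝ≥0∞ := ∑' n, ENNReal.ofReal (b n) with hBdef
  have hB : B = 2⁻¹ := by
    rw [hBdef]
    have h : ∀ n : ℕ, ENNReal.ofReal (b n) = ((2:ℝ≥0∞)⁻¹)^(n+2) := by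
      intro n; rw [hbdef]; exact ofReal_half_pow (n+2)
    rw [tsum_congr h, geo_half]
    rw [pow_two, ← mul_assoc, ENNReal.mul_inv_cancel (by norm_num) (by norm_num), one_mul]
  have hA : A ≤ ENNReal.ofReal ε := by
    rw [hAdef]
    have hterm : ∀ n : ℕ, ENNReal.ofReal (a n) ≤ ((2:ℝ≥0∞)⁻¹)^(n+1) * ENNReal.ofReal ε := by
      intro n
      have h1 : a n ≤ (1/2)^(n+1) * ε := by
        rw [hadef]
        have h2 : Real.exp (-(g (x n))) ≤ 1 :=
          Real.exp_le_one_iff.mpr (by simpa using hgx0 n)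
        calc ε * (1/2)^(n+1) * Real.exp (-(g (x n))) ≤ ε * (1/2)^(n+1) * 1 := by
              apply mul_le_mul_of_nonneg_left h2 (by positivity)
        _ = (1/2)^(n+1) * ε := by ring
      calc ENNReal.ofReal (a n) ≤ ENNReal.ofReal ((1/2)^(n+1) * ε) :=
            ENNReal.ofReal_le_ofReal h1
      _ = ((2:ℝ≥0∞)⁻¹)^(n+1) * ENNReal.ofReal ε := by
            rw [ENNReal.ofReal_mul (by positivity), ofReal_half_pow]
    calc ∑' n, ENNReal.ofReal (a n) ≤ ∑' n : ℕ, ((2:ℝ≥0∞)⁻¹)^(n+1) * ENNReal.ofReal ε :=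
          ENNReal.tsum_le_tsum hterm
    _ = (∑' n : ℕ, ((2:ℝ≥0∞)⁻¹)^(n+1)) * ENNReal.ofReal ε := ENNReal.tsum_mul_right
    _ = ENNReal.ofReal ε := by
          rw [geo_half 1, pow_one, ENNReal.mul_inv_cancel (by norm_num) (by norm_num), one_mul]
  have hAB : A + B ≤ 1 := by
    calc A + B ≤ ENNReal.ofReal ε + 2⁻¹ := by rw [hB]; exact add_le_add_left hA _
    _ ≤ ENNReal.ofReal (1/2) + 2⁻¹ := by
          exact add_le_add_left (ENNReal.ofReal_le_ofReal (by linarith)) _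
    _ = 2⁻¹ + 2⁻¹ := by rw [inv2]; norm_num
    _ = 1 := by
          rw [inv2, ← ENNReal.ofReal_add (by norm_num) (by norm_num), ← ENNReal.ofReal_one]
          norm_num
  -- the measure
  set μ : Measure ℝ :=
      Measure.sum (fun n => ENNReal.ofReal (a n) • Measure.dirac (x n))
    + Measure.sum (fun n => ENNReal.ofReal (b n) • Measure.dirac (y n))
    + (1 - (A + B)) • Measure.dirac 0 with hμdef
  have hμint : ∀ h : ℝ → ℝ≥0∞,
      ∫⁻ z, h z ∂μ = (∑' n, ENNReal.ofReal (a n) * h (x n))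
        + (∑' n, ENNReal.ofReal (b n) * h (y n)) + (1 - (A + B)) * h 0 := by
    intro h
    rw [hμdef]
    rw [lintegral_add_measure, lintegral_add_measure, lintegral_sum_measure,
      lintegral_sum_measure, lintegral_smul_measure, lintegral_dirac]
    simp only [lintegral_smul_measure, lintegral_dirac, smul_eq_mul]
  refine ⟨μ, ?_, ?_, ?_, ?_⟩
  · -- probability
    constructor
    have h1 := hμint (fun _ => 1)
    simp only [mul_one] at h1
    rw [lintegral_one] at h1
    rw [h1, ← hAdef, ← hBdef]
    exact add_tsub_cancel_of_le hAB
  · -- sub-ψ property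
    intro l hl
    have hl0 : (0:ℝ) ≤ l := le_of_not_gt fun h => hl (hneg l h)
    set E : ℝ≥0∞ := ENNReal.ofReal (Real.exp ((ψ l).toReal)) with hEdef
    have hE1 : 1 ≤ E := by
      rw [hEdef, ← ENNReal.ofReal_one]
      exact ENNReal.ofReal_le_ofReal (Real.one_le_exp ENNReal.toReal_nonneg)
    have hSa : ∀ l' : ℝ, ψ l' ≠ ⊤ →
        (∑' n, ENNReal.ofReal (a n) * ENNReal.ofReal (Real.exp (l' * x n)))
          ≤ ENNReal.ofReal ε * ENNReal.ofReal (Real.exp ((ψ l').toReal)) := by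
      intro l' hl'
      have hterm : ∀ n : ℕ, ENNReal.ofReal (a n) * ENNReal.ofReal (Real.exp (l' * x n))
          ≤ ((2:ℝ≥0∞)⁻¹)^(n+1)
            * (ENNReal.ofReal ε * ENNReal.ofReal (Real.exp ((ψ l').toReal))) := by
        intro n
        have hkey : l' * x n - (ψ l').toReal ≤ g (x n) :=
          sup_key ψ hψ0 (x n) l' hl' (hxtop n)
        have hreal : a n * Real.exp (l' * x n)
            ≤ (1/2)^(n+1) * (ε * Real.exp ((ψ l').toReal)) := by
          rw [hadef]
          have hexp : Real.exp (-(g (x n))) * Real.exp (l' * x n)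
              = Real.exp (l' * x n - g (x n)) := by
            rw [← Real.exp_add]; ring_nf
          calc ε * (1/2)^(n+1) * Real.exp (-(g (x n))) * Real.exp (l' * x n)
              = ε * (1/2)^(n+1) * Real.exp (l' * x n - g (x n)) := by
                rw [mul_assoc, hexp]
          _ ≤ ε * (1/2)^(n+1) * Real.exp ((ψ l').toReal) := by
                apply mul_le_mul_of_nonneg_left (Real.exp_le_exp.mpr (by linarith)) (by positivity)
          _ = (1/2)^(n+1) * (ε * Real.exp ((ψ l').toReal)) := by ring
        calc ENNReal.ofReal (a n) * ENNReal.ofReal (Real.exp (l' * x n))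
            = ENNReal.ofReal (a n * Real.exp (l' * x n)) :=
              (ENNReal.ofReal_mul (ha_nonneg n)).symm
        _ ≤ ENNReal.ofReal ((1/2)^(n+1) * (ε * Real.exp ((ψ l').toReal))) :=
              ENNReal.ofReal_le_ofReal hreal
        _ = ((2:ℝ≥0∞)⁻¹)^(n+1)
              * (ENNReal.ofReal ε * ENNReal.ofReal (Real.exp ((ψ l').toReal))) := by
              rw [ENNReal.ofReal_mul (by positivity), ofReal_half_pow,
                ENNReal.ofReal_mul hεpos.le]
      calc (∑' n, ENNReal.ofReal (a n) * ENNReal.ofReal (Real.exp (l' * x n)))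
          ≤ ∑' n : ℕ, ((2:ℝ≥0∞)⁻¹)^(n+1)
              * (ENNReal.ofReal ε * ENNReal.ofReal (Real.exp ((ψ l').toReal))) :=
            ENNReal.tsum_le_tsum hterm
      _ = (∑' n : ℕ, ((2:ℝ≥0∞)⁻¹)^(n+1))
            * (ENNReal.ofReal ε * ENNReal.ofReal (Real.exp ((ψ l').toReal))) :=
            ENNReal.tsum_mul_right
      _ = ENNReal.ofReal ε * ENNReal.ofReal (Real.exp ((ψ l').toReal)) := by
            rw [geo_half 1, pow_one, ENNReal.mul_inv_cancel (by norm_num) (by norm_num), one_mul]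
    have hSb : ∀ l' : ℝ, l₀ ≤ l' →
        (∑' n, ENNReal.ofReal (b n) * ENNReal.ofReal (Real.exp (l' * y n))) ≤ 4⁻¹ := by
      intro l' hl'
      have hterm : ∀ n : ℕ, ENNReal.ofReal (b n) * ENNReal.ofReal (Real.exp (l' * y n))
          ≤ ((2:ℝ≥0∞)⁻¹)^(n+3) := by
        intro n
        have h1 : l' * y n ≤ l₀ * y n := mul_le_mul_of_nonpos_right hl' (hy0 n)
        have h2 : Real.exp (l₀ * y n) ≤ (1/2)^(n+1) := by
          rw [hl₀y n]
          have h3 : -((n:ℝ)+1) = ((n+1:ℕ):ℝ) * (-1) := by push_cast; ring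
          rw [h3, Real.exp_nat_mul]
          have h4 : Real.exp (-1) ≤ 1/2 := by
            rw [Real.exp_neg]
            have h : (2:ℝ) ≤ Real.exp 1 := by
              have := Real.add_one_le_exp (1:ℝ); linarith
            rw [one_div]
            exact inv_anti₀ (by norm_num) h
          exact pow_le_pow_left₀ (Real.exp_nonneg _) h4 (n+1)
        have hreal : b n * Real.exp (l' * y n) ≤ (1/2)^(n+3) := by
          have h5 : Real.exp (l' * y n) ≤ (1/2)^(n+1) :=
            le_trans (Real.exp_le_exp.mpr h1) h2
          have h6 : b n * Real.exp (l' * y n) ≤ (1/2)^(n+2) * (1/2)^(n+1) := by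
            rw [hbdef]
            exact mul_le_mul_of_nonneg_left h5 (by positivity)
          have h7 : ((1:ℝ)/2)^(n+2) * (1/2)^(n+1) = (1/2)^(2*n+3) := by
            rw [← pow_add]; ring_nf
          have h8 : ((1:ℝ)/2)^(2*n+3) ≤ (1/2)^(n+3) :=
            pow_le_pow_of_le_one (by norm_num) (by norm_num) (by omega)
          calc b n * Real.exp (l' * y n) ≤ (1/2)^(n+2) * (1/2)^(n+1) := h6
          _ = (1/2)^(2*n+3) := h7
          _ ≤ (1/2)^(n+3) := h8
        calc ENNReal.ofReal (b n) * ENNReal.ofReal (Real.exp (l' * y n))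
            = ENNReal.ofReal (b n * Real.exp (l' * y n)) :=
              (ENNReal.ofReal_mul (hb_nonneg n)).symm
        _ ≤ ENNReal.ofReal ((1/2)^(n+3)) := ENNReal.ofReal_le_ofReal hreal
        _ = ((2:ℝ≥0∞)⁻¹)^(n+3) := ofReal_half_pow (n+3)
      calc (∑' n, ENNReal.ofReal (b n) * ENNReal.ofReal (Real.exp (l' * y n)))
          ≤ ∑' n : ℕ, ((2:ℝ≥0∞)⁻¹)^(n+3) := ENNReal.tsum_le_tsum hterm
      _ = 2 * 2⁻¹^3 := geo_half 3
      _ = 4⁻¹ := two_inv_pow3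
    rw [hμint]
    rcases le_or_gt l₀ l with hcase | hcase
    · -- large l
      have h1 : (∑' n, ENNReal.ofReal (a n) * ENNReal.ofReal (Real.exp (l * x n)))
          ≤ 8⁻¹ * E := by
        refine le_trans (hSa l hl) (mul_le_mul_left ?_ E)
        calc ENNReal.ofReal ε ≤ ENNReal.ofReal (1/8) := ENNReal.ofReal_le_ofReal hεle
        _ = 8⁻¹ := by rw [one_div, ← inv8]
      have h2 := hSb l hcase
      have h3 : (1 - (A+B)) * ENNReal.ofReal (Real.exp (l * 0)) ≤ 2⁻¹ := by
        rw [mul_zero, Real.exp_zero, ENNReal.ofReal_one, mul_one]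
        calc 1 - (A+B) ≤ 1 - B := tsub_le_tsub_left le_add_self 1
        _ = 2⁻¹ := by rw [hB, ENNReal.one_sub_inv_two]
      calc (∑' n, ENNReal.ofReal (a n) * ENNReal.ofReal (Real.exp (l * x n)))
            + (∑' n, ENNReal.ofReal (b n) * ENNReal.ofReal (Real.exp (l * y n)))
            + (1 - (A+B)) * ENNReal.ofReal (Real.exp (l * 0))
          ≤ 8⁻¹ * E + 4⁻¹ + 2⁻¹ := add_le_add (add_le_add h1 h2) h3
      _ ≤ E := arith1 E hE1
    · -- small l
      set t : ℝ := l / l₀ with htdef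
      have ht0 : 0 ≤ t := div_nonneg hl0 hl₀pos.le
      have ht1 : t ≤ 1 := by
        rw [htdef]
        exact (div_le_one hl₀pos).mpr hcase.le
      have htl : t * l₀ = l := by
        rw [htdef]
        exact div_mul_cancel₀ l hl₀pos.ne'
      have hcvx : ∀ z : ℝ, Real.exp (l * z) ≤ (1-t) + t * Real.exp (l₀ * z) := by
        intro z
        have h := convexOn_exp.2 (Set.mem_univ (0:ℝ)) (Set.mem_univ (l₀ * z))
          (by linarith : (0:ℝ) ≤ 1 - t) ht0 (by ring)
        simp only [smul_eq_mul, mul_zero, zero_add, Real.exp_zero, mul_one] at h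
        have harg : t * (l₀ * z) = l * z := by rw [← htl]; ring
        rw [harg] at h
        linarith
      have hsplit : ∀ (w z : ℝ), 0 ≤ w →
          ENNReal.ofReal w * ENNReal.ofReal (Real.exp (l * z))
            ≤ ENNReal.ofReal (1-t) * ENNReal.ofReal w
              + ENNReal.ofReal t * (ENNReal.ofReal w * ENNReal.ofReal (Real.exp (l₀ * z))) := by
        intro w z hw
        calc ENNReal.ofReal w * ENNReal.ofReal (Real.exp (l * z))
            ≤ ENNReal.ofReal w * ENNReal.ofReal ((1-t) + t * Real.exp (l₀ * z)) :=
              mul_le_mul_right (ENNReal.ofReal_le_ofReal (hcvx z)) _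
        _ = ENNReal.ofReal w * (ENNReal.ofReal (1-t)
              + ENNReal.ofReal t * ENNReal.ofReal (Real.exp (l₀*z))) := by
              rw [ENNReal.ofReal_add (by linarith) (by positivity), ENNReal.ofReal_mul ht0]
        _ = ENNReal.ofReal (1-t) * ENNReal.ofReal w
              + ENNReal.ofReal t * (ENNReal.ofReal w * ENNReal.ofReal (Real.exp (l₀*z))) := by
              ring
      have hεE : ENNReal.ofReal ε * ENNReal.ofReal (Real.exp ((ψ l₀).toReal)) = 8⁻¹ := by
        rw [← ENNReal.ofReal_mul hεpos.le, hεdef]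
        have : Real.exp (-(ψ l₀).toReal) / 8 * Real.exp ((ψ l₀).toReal) = 8⁻¹ := by
          rw [div_mul_eq_mul_div, ← Real.exp_add]
          norm_num
        rw [this, ← inv8]
      have hPa : (∑' n, ENNReal.ofReal (a n) * ENNReal.ofReal (Real.exp (l * x n)))
          ≤ ENNReal.ofReal (1-t) * A + ENNReal.ofReal t * 8⁻¹ := by
        calc (∑' n, ENNReal.ofReal (a n) * ENNReal.ofReal (Real.exp (l * x n)))
            ≤ ∑' n, (ENNReal.ofReal (1-t) * ENNReal.ofReal (a n)
                + ENNReal.ofReal t * (ENNReal.ofReal (a n) * ENNReal.ofReal (Real.exp (l₀ * x n)))) :=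
              ENNReal.tsum_le_tsum (fun n => hsplit (a n) (x n) (ha_nonneg n))
        _ = ENNReal.ofReal (1-t) * A
              + ENNReal.ofReal t * (∑' n, ENNReal.ofReal (a n) * ENNReal.ofReal (Real.exp (l₀ * x n))) := by
              rw [ENNReal.tsum_add, ENNReal.tsum_mul_left, ENNReal.tsum_mul_left, ← hAdef]
        _ ≤ ENNReal.ofReal (1-t) * A + ENNReal.ofReal t * 8⁻¹ := by
              refine add_le_add_right (mul_le_mul_right ?_ _) _
              rw [← hεE]
              exact hSa l₀ hl₀fin
      have hPb : (∑' n, ENNReal.ofReal (b n) * ENNReal.ofReal (Real.exp (l * y n)))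
          ≤ ENNReal.ofReal (1-t) * B + ENNReal.ofReal t * 4⁻¹ := by
        calc (∑' n, ENNReal.ofReal (b n) * ENNReal.ofReal (Real.exp (l * y n)))
            ≤ ∑' n, (ENNReal.ofReal (1-t) * ENNReal.ofReal (b n)
                + ENNReal.ofReal t * (ENNReal.ofReal (b n) * ENNReal.ofReal (Real.exp (l₀ * y n)))) :=
              ENNReal.tsum_le_tsum (fun n => hsplit (b n) (y n) (hb_nonneg n))
        _ = ENNReal.ofReal (1-t) * B
              + ENNReal.ofReal t * (∑' n, ENNReal.ofReal (b n) * ENNReal.ofReal (Real.exp (l₀ * y n))) := by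
              rw [ENNReal.tsum_add, ENNReal.tsum_mul_left, ENNReal.tsum_mul_left, ← hBdef]
        _ ≤ ENNReal.ofReal (1-t) * B + ENNReal.ofReal t * 4⁻¹ :=
              add_le_add_right (mul_le_mul_right (hSb l₀ le_rfl) _) _
      have hrest : (1 - (A+B)) * ENNReal.ofReal (Real.exp (l * 0)) = 1 - (A+B) := by
        rw [mul_zero, Real.exp_zero, ENNReal.ofReal_one, mul_one]
      calc (∑' n, ENNReal.ofReal (a n) * ENNReal.ofReal (Real.exp (l * x n)))
            + (∑' n, ENNReal.ofReal (b n) * ENNReal.ofReal (Real.exp (l * y n)))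
            + (1 - (A+B)) * ENNReal.ofReal (Real.exp (l * 0))
          ≤ (ENNReal.ofReal (1-t) * A + ENNReal.ofReal t * 8⁻¹)
            + (ENNReal.ofReal (1-t) * B + ENNReal.ofReal t * 4⁻¹) + (1 - (A+B)) := by
            rw [hrest]
            exact add_le_add (add_le_add hPa hPb) le_rfl
      _ = ENNReal.ofReal (1-t) * (A + B) + ENNReal.ofReal t * (8⁻¹ + 4⁻¹) + (1 - (A+B)) := by
            ring
      _ ≤ ENNReal.ofReal (1-t) * (A + B) + ENNReal.ofReal t * (A + B) + (1 - (A+B)) := by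
            refine add_le_add_left (add_le_add_right (mul_le_mul_right ?_ _) _) _
            calc (8⁻¹ : ℝ≥0∞) + 4⁻¹ ≤ 2⁻¹ := eighth_quarter
            _ = B := hB.symm
            _ ≤ A + B := le_add_self
      _ = (ENNReal.ofReal (1-t) + ENNReal.ofReal t) * (A + B) + (1 - (A+B)) := by ring
      _ = 1 * (A + B) + (1 - (A+B)) := by
            rw [← ENNReal.ofReal_add (by linarith) ht0]
            norm_num
      _ = 1 := by rw [one_mul]; exact add_tsub_cancel_of_le hAB
      _ ≤ E := hE1
  · -- concentration on dom ψ*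
    set T : Set ℝ := (Set.range x ∪ Set.range y ∪ {0})ᶜ with hTdef
    have hTm : MeasurableSet T :=
      (((Set.countable_range x).union (Set.countable_range y)).union
        (Set.countable_singleton 0)).measurableSet.compl
    have hμT : μ T = 0 := by
      rw [hμdef, Measure.add_apply, Measure.add_apply, Measure.sum_apply _ hTm,
        Measure.sum_apply _ hTm]
      have hxT : ∀ n, (ENNReal.ofReal (a n) • Measure.dirac (x n)) T = 0 := by
        intro n
        rw [Measure.smul_apply, Measure.dirac_apply, Set.indicator_of_notMem, smul_zero]
        rw [hTdef]
        simp only [Set.mem_compl_iff, not_not]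
        exact Or.inl (Or.inl ⟨n, rfl⟩)
      have hyT : ∀ n, (ENNReal.ofReal (b n) • Measure.dirac (y n)) T = 0 := by
        intro n
        rw [Measure.smul_apply, Measure.dirac_apply, Set.indicator_of_notMem, smul_zero]
        rw [hTdef]
        simp only [Set.mem_compl_iff, not_not]
        exact Or.inl (Or.inr ⟨n, rfl⟩)
      have h0T : ((1 - (A+B)) • Measure.dirac (0:ℝ)) T = 0 := by
        rw [Measure.smul_apply, Measure.dirac_apply, Set.indicator_of_notMem, smul_zero]
        rw [hTdef]
        simp only [Set.mem_compl_iff, not_not]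
        exact Or.inr rfl
      simp [hxT, hyT, h0T]
    refine measure_mono_null ?_ hμT
    intro z hz
    simp only [Set.mem_setOf_eq] at hz
    rw [hTdef]
    simp only [Set.mem_compl_iff]
    intro hmem
    rcases hmem with (⟨n, rfl⟩ | ⟨n, rfl⟩) | h0
    · exact hxtop n hz
    · have h' : (⨆ l : ℝ, (((l * y n : ℝ)) : EReal) - ((ψ l : ℝ≥0∞) : EReal)) ≤ 0 :=
        sup_nonpos ψ hneg (y n) (hy0 n)
      rw [hz] at h'
      exact absurd h' (by simp)
    · have hz0 : z = 0 := h0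
      have h' : (⨆ l : ℝ, (((l * z : ℝ)) : EReal) - ((ψ l : ℝ≥0∞) : EReal)) ≤ 0 :=
        sup_nonpos ψ hneg z (le_of_eq hz0)
      rw [hz] at h'
      exact absurd h' (by simp)
  · -- infinite integral
    rw [hμint (fun z => ENNReal.ofReal |f z|)]
    have hterm : ∀ n : ℕ, (1:ℝ≥0∞) ≤ ENNReal.ofReal (a n) * ENNReal.ofReal |f (x n)| := by
      intro n
      rw [← ENNReal.ofReal_mul (ha_nonneg n), ← ENNReal.ofReal_one]
      apply ENNReal.ofReal_le_ofReal
      have hbig := hxbig n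
      have hsplit : a n * |f (x n)|
          = (ε * (1/2)^(n+1)) * (|f (x n)| * Real.exp (-(g (x n)))) := by
        rw [hadef]; ring
      rw [hsplit]
      have hone : (ε * (1/2)^(n+1)) * (16 * Real.exp ((ψ l₀).toReal) * 2^n) = 1 := by
        rw [hεdef]
        have h1 : Real.exp (-(ψ l₀).toReal) * Real.exp ((ψ l₀).toReal) = 1 := by
          rw [← Real.exp_add]; simp
        have h3 : ((1:ℝ)/2)^n * 2^n = 1 := by
          rw [← mul_pow]; norm_num
        have h2 : ((1:ℝ)/2)^(n+1) * 2^n = 1/2 := by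
          rw [pow_succ]
          calc ((1:ℝ)/2)^n * (1/2) * 2^n = ((1/2)^n * 2^n) * (1/2) := by ring
          _ = 1/2 := by rw [h3]; ring
        calc Real.exp (-(ψ l₀).toReal) / 8 * (1/2)^(n+1)
              * (16 * Real.exp ((ψ l₀).toReal) * 2^n)
            = 2 * (Real.exp (-(ψ l₀).toReal) * Real.exp ((ψ l₀).toReal))
              * ((1/2)^(n+1) * 2^n) := by ring
        _ = 1 := by rw [h1, h2]; norm_num
      calc (1:ℝ) = (ε * (1/2)^(n+1)) * (16 * Real.exp ((ψ l₀).toReal) * 2^n) := hone.symm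
      _ ≤ (ε * (1/2)^(n+1)) * (|f (x n)| * Real.exp (-(g (x n)))) := by
            apply mul_le_mul_of_nonneg_left hbig (by positivity)
    have h1 : (∑' n, ENNReal.ofReal (a n) * ENNReal.ofReal |f (x n)|) = ⊤ := by
      refine top_unique ?_
      calc (⊤:ℝ≥0∞) = ∑' _ : ℕ, (1:ℝ≥0∞) :=
            (ENNReal.tsum_const_eq_top_of_ne_zero one_ne_zero).symm
      _ ≤ _ := ENNReal.tsum_le_tsum hterm
    rw [h1]
    simp
end

section
/- Let P be the set of Σ-invariant probability measures on X, where Σ is a compact group acting measurably on X with Haar probability measure π. If f is a [-1,∞]-valued measurable function with orbit average f_π ≤ 0 pointwise, then h = 1 + f - f_π is a [0,∞]-valued function satisfying ∫ h dμ = 1 for every μ ∈ P (an exact e-variable). Conversely, for any e-variable h for P, the function f = h - 1 satisfies f_π ≤ 0 pointwise and h ≤ 1 + f - f_π. -/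
open MeasureTheory
open scoped ENNReal

/-- E-variables for the `Σ`-invariant hypothesis. Writing `F = 1 + f` for a `[-1,∞]`-valued
measurable `f` (so `F : X → [0,∞]`), the condition `f_π ≤ 0` reads `F_π ≤ 1`, and
`h = 1 + f - f_π = F + (1 - F_π)`. Every such `h` is an exact e-variable:
`∫ h dμ = 1` for every `Σ`-invariant probability `μ`. Conversely, for every e-variable `h`,
the function `f = h - 1` (i.e. `F = h`) satisfies `f_π ≤ 0` pointwise (`h_π ≤ 1`) and
`h ≤ 1 + f - f_π = h + (1 - h_π)` pointwise. -/
theorem stmt_16 {G X : Type*} [Group G] [TopologicalSpace G] [IsTopologicalGroup G]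
    [CompactSpace G] [MeasurableSpace G] [BorelSpace G]
    [MeasurableSpace X] [MulAction G X]
    (hact : Measurable fun p : G × X => p.1 • p.2)
    (π : Measure G) [IsProbabilityMeasure π]
    (hπinv : ∀ g : G, Measure.map (fun h => g * h) π = π) :
    (∀ F : X → ℝ≥0∞, Measurable F → (∀ x, ∫⁻ σ : G, F (σ • x) ∂π ≤ 1) →
      ∀ μ : Measure X, IsProbabilityMeasure μ →
        (∀ σ : G, Measure.map (fun x => σ • x) μ = μ) →
        ∫⁻ x, (F x + (1 - ∫⁻ σ : G, F (σ • x) ∂π)) ∂μ = 1) ∧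
    (∀ h : X → ℝ≥0∞, Measurable h →
      (∀ μ : Measure X, IsProbabilityMeasure μ →
        (∀ σ : G, Measure.map (fun x => σ • x) μ = μ) → ∫⁻ x, h x ∂μ ≤ 1) →
      ∀ x, (∫⁻ σ : G, h (σ • x) ∂π ≤ 1) ∧
        h x ≤ h x + (1 - ∫⁻ σ : G, h (σ • x) ∂π)) := by
  have hsm : ∀ σ : G, Measurable fun x : X => σ • x := fun σ =>
    hact.comp (measurable_const.prodMk measurable_id)
  constructor
  · intro F hF hFπ μ hμ hμinv
    -- measurability of the orbit average
    have hswap : Measurable fun p : X × G => F (p.2 • p.1) :=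
      (hF.comp hact).comp measurable_swap
    have hFπm : Measurable fun x : X => ∫⁻ σ : G, F (σ • x) ∂π :=
      Measurable.lintegral_prod_right (f := fun (x : X) (σ : G) => F (σ • x)) hswap
    -- ∫ F_π dμ = ∫ F dμ by Tonelli and invariance
    have key : ∫⁻ x, (∫⁻ σ : G, F (σ • x) ∂π) ∂μ = ∫⁻ x, F x ∂μ := by
      rw [lintegral_lintegral_swap hswap.aemeasurable]
      have : ∀ σ : G, ∫⁻ x, F (σ • x) ∂μ = ∫⁻ x, F x ∂μ := by
        intro σ
        rw [← lintegral_map hF (hsm σ), hμinv σ]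
      simp_rw [this]
      simp
    have ha : ∫⁻ x, F x ∂μ ≤ 1 := by
      rw [← key]
      calc ∫⁻ x, (∫⁻ σ : G, F (σ • x) ∂π) ∂μ ≤ ∫⁻ _, 1 ∂μ :=
            lintegral_mono fun x => hFπ x
        _ = 1 := by simp
    rw [lintegral_add_right _ (show Measurable fun x => 1 - ∫⁻ σ : G, F (σ • x) ∂π from measurable_const.sub hFπm),
      lintegral_sub hFπm (ne_top_of_le_ne_top ENNReal.one_ne_top (key ▸ ha))
        (Filter.Eventually.of_forall hFπ), key, lintegral_const]
    simp only [measure_univ, one_mul]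
    exact add_tsub_cancel_of_le ha
  · intro h hh he x
    refine ⟨?_, le_self_add⟩
    set μ : Measure X := Measure.map (fun σ : G => σ • x) π with hμdef
    have hox : Measurable fun σ : G => σ • x :=
      hact.comp (measurable_id.prodMk measurable_const)
    have hμprob : IsProbabilityMeasure μ := Measure.isProbabilityMeasure_map hox.aemeasurable
    have hμinv : ∀ σ : G, Measure.map (fun y => σ • y) μ = μ := by
      intro σ
      rw [hμdef, Measure.map_map (hsm σ) hox]
      have : ((fun y => σ • y) ∘ fun g : G => g • x) = (fun g : G => g • x) ∘ (fun g => σ * g) := by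
        funext g; simp [mul_smul]
      rw [this, ← Measure.map_map hox (measurable_const_mul σ), hπinv σ]
    have := he μ hμprob hμinv
    rwa [hμdef, lintegral_map hh hox] at this
end

section
/- Let μ be a probability measure on a measurable space X and let f₁,...,f_m be measurable μ-integrable real functions. Then there exists a finitely supported probability measure ν on X (a finite convex combination of Dirac measures) such that ∫ f_i dν = ∫ f_i dμ for all i = 1,...,m. -/
open MeasureTheory Set
open scoped ENNReal

lemma interior_closure_subset_of_convex {E : Type*} [NormedAddCommGroup E] [NormedSpace ℝ E]
    [FiniteDimensional ℝ E] {K : Set E} (hK : Convex ℝ K) :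
    interior (closure K) ⊆ K := by
  intro x hx
  have hCne : (interior (closure K)).Nonempty := ⟨x, hx⟩
  have hspan : affineSpan ℝ (closure K) = ⊤ :=
    (hK.closure.interior_nonempty_iff_affineSpan_eq_top).mp hCne
  have hspanK : affineSpan ℝ K = ⊤ := by
    have h1 : affineSpan ℝ (closure K) ≤ affineSpan ℝ K := by
      rw [affineSpan_le]
      have hcl : IsClosed ((affineSpan ℝ K : AffineSubspace ℝ E) : Set E) :=
        (affineSpan ℝ K).closed_of_finiteDimensional
      calc closure K ⊆ closure ((affineSpan ℝ K : AffineSubspace ℝ E) : Set E) :=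
            closure_mono (subset_affineSpan ℝ K)
        _ = _ := hcl.closure_eq
    exact top_le_iff.mp (hspan ▸ h1)
  have hKi : (interior K).Nonempty := hK.interior_nonempty_iff_affineSpan_eq_top.mpr hspanK
  obtain ⟨x₀, hx₀⟩ := hKi
  rcases eq_or_ne x x₀ with rfl | hne
  · exact interior_subset hx₀
  obtain ⟨ε, hε, hball⟩ := Metric.isOpen_iff.mp isOpen_interior x hx
  have hnorm : (0:ℝ) < ‖x - x₀‖ := by
    simpa [norm_pos_iff, sub_ne_zero] using hne
  set δ : ℝ := ε / (2 * ‖x - x₀‖) with hδdef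
  have hδ : 0 < δ := by positivity
  set y : E := x + δ • (x - x₀) with hy
  have hyi : y ∈ interior (closure K) := by
    apply hball
    have h1 : ‖y - x‖ = δ * ‖x - x₀‖ := by
      simp [hy, norm_smul, abs_of_pos hδ]
    have h2 : δ * ‖x - x₀‖ = ε / 2 := by
      rw [hδdef]; field_simp
    rw [Metric.mem_ball, dist_eq_norm, h1, h2]
    linarith
  have hyK : y ∈ closure K := interior_subset hyi
  have h1δ : (0:ℝ) < 1 + δ := by positivity
  have hxseg : x ∈ openSegment ℝ x₀ y := by
    refine ⟨1 - 1/(1+δ), 1/(1+δ), ?_, by positivity, by ring, ?_⟩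
    · rw [sub_pos, div_lt_one h1δ]; linarith
    · rw [hy]
      have hcoef : (1/(1+δ)) * δ = 1 - 1/(1+δ) := by field_simp; ring
      rw [smul_add, smul_smul, hcoef]
      module
  exact interior_subset (hK.openSegment_interior_closure_subset_interior hx₀ hyK hxseg)

lemma support_hyperplane {E : Type*} [NormedAddCommGroup E] [InnerProductSpace ℝ E]
    [FiniteDimensional ℝ E] {K : Set E} (hK : Convex ℝ K) {c : E}
    (hc : c ∈ closure K) (hcK : c ∉ K) :
    ∃ L : E →L[ℝ] ℝ, L ≠ 0 ∧ ∀ y ∈ K, L y ≤ L c := by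
  by_cases hi : (interior (closure K)).Nonempty
  · have hcint : c ∉ interior (closure K) := fun h => hcK (interior_closure_subset_of_convex hK h)
    obtain ⟨L, hL⟩ := geometric_hahn_banach_open_point
      (hK.closure.interior) isOpen_interior hcint
    obtain ⟨a₀, ha₀⟩ := hi
    refine ⟨L, ?_, ?_⟩
    · rintro rfl
      exact absurd (hL a₀ ha₀) (by simp)
    · intro y hy
      have hyc : y ∈ closure (closure K) := by
        rw [closure_closure]; exact subset_closure hy
      have key : ∀ t ∈ Ioo (0:ℝ) 1, (1 - t) * L a₀ + t * L y < L c := by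
        intro t ht
        have hmem : (1 - t) • a₀ + t • y ∈ interior (closure K) :=
          hK.closure.combo_interior_closure_mem_interior ha₀ hyc
            (by linarith [ht.2]) (le_of_lt ht.1) (by ring)
        have := hL _ hmem
        simpa [map_add, L.map_smul, smul_eq_mul] using this
      have htend : Filter.Tendsto (fun t : ℝ => (1 - t) * L a₀ + t * L y)
          (nhdsWithin 1 (Iio 1)) (nhds (L y)) := by
        have hcont : Continuous (fun t : ℝ => (1 - t) * L a₀ + t * L y) := by continuity
        have := hcont.tendsto 1
        simpa using this.mono_left nhdsWithin_le_nhds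
      refine le_of_tendsto htend ?_
      filter_upwards [Ioo_mem_nhdsLT_of_mem (show (1:ℝ) ∈ Ioc (0:ℝ) 1 by norm_num)] with t ht
      exact (key t ht).le
  · have hCne : (closure K).Nonempty := ⟨c, hc⟩
    have hspan : affineSpan ℝ (closure K) ≠ ⊤ := by
      intro h
      exact hi (hK.closure.interior_nonempty_iff_affineSpan_eq_top.mpr h)
    have hsne : ((affineSpan ℝ (closure K) : AffineSubspace ℝ E) : Set E).Nonempty :=
      hCne.mono (subset_affineSpan ℝ _)
    have hdir : (affineSpan ℝ (closure K)).direction ≠ ⊤ := by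
      intro h
      exact hspan ((AffineSubspace.direction_eq_top_iff_of_nonempty hsne).mp h)
    have hbot : ((affineSpan ℝ (closure K)).direction)ᗮ ≠ ⊥ := by
      intro h
      exact hdir (Submodule.orthogonal_eq_bot_iff.mp h)
    obtain ⟨v, hv, hv0⟩ := Submodule.exists_mem_ne_zero_of_ne_bot hbot
    refine ⟨innerSL ℝ v, ?_, ?_⟩
    · intro h
      have : (innerSL ℝ v) v = 0 := by rw [h]; rfl
      rw [innerSL_apply_apply, real_inner_self_eq_norm_sq] at this
      exact hv0 (by simpa [pow_eq_zero_iff] using (norm_eq_zero.mp (by nlinarith [norm_nonneg v])))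
    · intro y hy
      have hyA : y ∈ (affineSpan ℝ (closure K) : AffineSubspace ℝ E) :=
        subset_affineSpan ℝ _ (subset_closure hy)
      have hcA : c ∈ (affineSpan ℝ (closure K) : AffineSubspace ℝ E) :=
        subset_affineSpan ℝ _ hc
      have hsub : y - c ∈ (affineSpan ℝ (closure K)).direction := by
        simpa using AffineSubspace.vsub_mem_direction hyA hcA
      have : inner ℝ (y - c) v = (0:ℝ) := hv _ hsub
      have h2 : inner ℝ v (y - c) = (0:ℝ) := by rwa [real_inner_comm]
      have h3 : (innerSL ℝ v) y - (innerSL ℝ v) c = 0 := by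
        simpa [inner_sub_right] using h2
      linarith [h3]

section aux
universe u

lemma euclid_sum_apply {m : ℕ} {ι : Type*} (s : Finset ι) (v : ι → EuclideanSpace ℝ (Fin m))
    (j : Fin m) : (∑ i ∈ s, v i) j = ∑ i ∈ s, v i j :=
  map_sum (EuclideanSpace.projₗ (𝕜 := ℝ) j) v s

lemma barycenter_aux : ∀ (m : ℕ) {X : Type u} [MeasurableSpace X] (μ : Measure X)
    [IsProbabilityMeasure μ] (f : Fin m → X → ℝ),
    (∀ i, Measurable (f i)) → (∀ i, Integrable (f i) μ) →
    ∃ (n : ℕ) (w : Fin n → ℝ) (pts : Fin n → X),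
      (∀ j, 0 ≤ w j) ∧ (∑ j, w j = 1) ∧
      ∀ i, ∑ j, w j * f i (pts j) = ∫ x, f i x ∂μ := by
  intro m
  induction m using Nat.strong_induction_on with
  | _ m IH =>
  intro X _ μ _ f hmeas hint
  classical
  set E := EuclideanSpace ℝ (Fin m) with hE
  set g : X → E := fun x => WithLp.toLp 2 (fun i => f i x : Fin m → ℝ) with hg
  have hgdecomp : ∀ x, g x = ∑ i, f i x • EuclideanSpace.single i (1:ℝ) := by
    intro x
    ext j
    rw [euclid_sum_apply]
    simp [hg, PiLp.smul_apply, EuclideanSpace.single_apply, Finset.sum_ite_eq,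
      Finset.mem_univ]
  have hgint : Integrable g μ := by
    rw [show g = fun x => ∑ i, f i x • EuclideanSpace.single i (1:ℝ) from funext hgdecomp]
    exact integrable_finset_sum _ fun i _ => (hint i).smul_const _
  set c : E := ∫ x, g x ∂μ with hc
  have hci : ∀ i, c i = ∫ x, f i x ∂μ := by
    intro i
    have := (EuclideanSpace.proj (𝕜 := ℝ) i).integral_comp_comm hgint
    simpa [hc, hg] using this.symm
  set K : Set E := convexHull ℝ (Set.range g) with hK
  by_cases hcK : c ∈ K
  · -- c is a finite convex combination of points of range g
    obtain ⟨ι, hfin, z, wt, hzr, _, hwpos, hwsum, hwz⟩ :=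
      eq_pos_convex_span_of_mem_convexHull hcK
    choose xs hxs using fun i : ι => hzr (Set.mem_range_self i)
    refine ⟨Fintype.card ι, fun j => wt ((Fintype.equivFin ι).symm j),
      fun j => xs ((Fintype.equivFin ι).symm j), fun j => (hwpos _).le, ?_, ?_⟩
    · rw [Equiv.sum_comp (Fintype.equivFin ι).symm wt]; exact hwsum
    · intro i
      have hsum : ∑ j, wt ((Fintype.equivFin ι).symm j) * f i (xs ((Fintype.equivFin ι).symm j))
          = ∑ a : ι, wt a * f i (xs a) :=
        Equiv.sum_comp (Fintype.equivFin ι).symm (fun a => wt a * f i (xs a))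
      rw [hsum, ← hci i]
      have : ∀ a : ι, f i (xs a) = z a i := by
        intro a; simp [← hxs a, hg]
      calc ∑ a : ι, wt a * f i (xs a) = ∑ a : ι, wt a * z a i := by
            simp_rw [this]
        _ = (EuclideanSpace.proj (𝕜 := ℝ) i) (∑ a : ι, wt a • z a) := by
            rw [map_sum]
            simp [EuclideanSpace.proj]
        _ = c i := by rw [hwz]; rfl
  · -- separation step
    have hXne : Nonempty X := by
      by_contra h
      rw [not_nonempty_iff] at h
      have : μ Set.univ = 0 := by simp [Set.univ_eq_empty_iff.mpr h]
      simp [measure_univ] at this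
    have hcclos : c ∈ closure K := by
      have hconv : Convex ℝ (closure K) := (convex_convexHull ℝ _).closure
      refine hconv.integral_mem isClosed_closure ?_ hgint
      exact Filter.Eventually.of_forall fun x =>
        subset_closure (subset_convexHull ℝ _ (Set.mem_range_self x))
    obtain ⟨L, hL0, hLle⟩ := support_hyperplane (convex_convexHull ℝ _) hcclos hcK
    set a : Fin m → ℝ := fun i => L (EuclideanSpace.single i 1) with ha
    have hexp : ∀ y : E, L y = ∑ i, y i * a i := by
      intro y
      have hy : y = ∑ i, y i • EuclideanSpace.single i (1:ℝ) := by
        ext j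
        rw [euclid_sum_apply]
        simp [PiLp.smul_apply, EuclideanSpace.single_apply, Finset.sum_ite_eq,
          Finset.mem_univ]
      conv_lhs => rw [hy]
      rw [map_sum]
      simp [ha, L.map_smul, smul_eq_mul]
    obtain ⟨i₀, hi₀⟩ : ∃ i₀, a i₀ ≠ 0 := by
      by_contra h
      push_neg at h
      apply hL0
      ext y
      rw [hexp y]
      simp [h]
    -- m is a successor
    obtain ⟨k, rfl⟩ : ∃ k, m = k + 1 := ⟨m - 1, (Nat.succ_pred_eq_of_pos i₀.pos).symm⟩
    -- a.e. the hyperplane relation holds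
    have hLgle : ∀ x, L (g x) ≤ L c := fun x =>
      hLle _ (subset_convexHull ℝ _ (Set.mem_range_self x))
    have hLgint : Integrable (fun x => L (g x)) μ := L.integrable_comp hgint
    have hLgval : ∫ x, L (g x) ∂μ = L c := by
      rw [L.integral_comp_comm hgint]
    have hae : (fun x => L c - L (g x)) =ᵐ[μ] 0 := by
      rw [← integral_eq_zero_iff_of_nonneg]
      · rw [integral_sub (integrable_const _) hLgint, hLgval, integral_const]
        simp [measure_univ]
      · intro x; simp [sub_nonneg, hLgle x]
      · exact (integrable_const _).sub hLgint
    set A : Set X := {x | L (g x) = L c} with hA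
    have hmeasA : MeasurableSet A := by
      have : A = (fun x => ∑ i, f i x * a i) ⁻¹' {L c} := by
        ext x
        simp [hA, hexp (g x)]; simp [hg]
      rw [this]
      exact (Finset.measurable_sum _ fun i _ => (hmeas i).mul_const _) (measurableSet_singleton _)
    have hAfull : μ Aᶜ = 0 := by
      have h1 : μ {x | ¬ ((fun x => L c - L (g x)) x = 0)} = 0 := hae
      refine measure_mono_null ?_ h1
      intro x hx
      simp only [Set.mem_compl_iff, hA, Set.mem_setOf_eq] at hx ⊢
      intro h
      exact hx (by linarith)
    have hAae : A =ᵐ[μ] Set.univ := by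
      rw [Filter.eventuallyEq_univ, mem_ae_iff]
      simpa using hAfull
    -- subtype measure
    set μ' : Measure A := μ.comap Subtype.val with hμ'
    have hemb : MeasurableEmbedding (Subtype.val : A → X) :=
      MeasurableEmbedding.subtype_coe hmeasA
    have hμ'map : (μ'.map Subtype.val) = μ.restrict A := by
      rw [hμ']
      exact map_comap_subtype_coe hmeasA _
    have hrestr : μ.restrict A = μ := by
      rw [Measure.restrict_congr_set hAae, Measure.restrict_univ]
    have : IsProbabilityMeasure μ' := by
      constructor
      rw [hμ', hemb.comap_apply]
      simp only [Set.image_univ, Subtype.range_coe]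
      rw [← measure_univ (μ := μ)]
      exact measure_congr hAae
    set f' : Fin k → A → ℝ := fun i x => f (i₀.succAbove i) x.val with hf'
    have hmeas' : ∀ i, Measurable (f' i) := fun i =>
      (hmeas _).comp measurable_subtype_coe
    have hint' : ∀ i, Integrable (f' i) μ' := by
      intro i
      have h1 : Integrable (f (i₀.succAbove i)) (μ'.map Subtype.val) := by
        rw [hμ'map, hrestr]; exact hint _
      exact (hemb.integrable_map_iff.mp h1)
    obtain ⟨n, w, pts', hw0, hw1, hsum⟩ := IH k (Nat.lt_succ_self k) μ' f' hmeas' hint'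
    have hIntEq : ∀ j : Fin (k+1), ∫ x : A, f j x.val ∂μ' = ∫ x, f j x ∂μ := by
      intro j
      rw [hμ', integral_subtype_comap hmeasA, hrestr]
    refine ⟨n, w, fun j => (pts' j).val, hw0, hw1, ?_⟩
    -- relation at points of A
    have hrel : ∀ x : A, f i₀ x.val * a i₀ = L c - ∑ i', f (i₀.succAbove i') x.val * a (i₀.succAbove i') := by
      intro x
      have hx : L (g x.val) = L c := x.2
      rw [hexp (g x.val)] at hx
      have hgi : ∀ i, (g x.val) i = f i x.val := fun i => rfl
      simp_rw [hgi] at hx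
      rw [Fin.sum_univ_succAbove (fun i => f i x.val * a i) i₀] at hx
      linarith
    have hrelInt : (∫ x, f i₀ x ∂μ) * a i₀
        = L c - ∑ i', (∫ x, f (i₀.succAbove i') x ∂μ) * a (i₀.succAbove i') := by
      have hLc : L c = ∑ i, (∫ x, f i x ∂μ) * a i := by
        rw [hexp c]
        congr 1
        ext i
        rw [hci i]
      rw [hLc, Fin.sum_univ_succAbove (fun i => (∫ x, f i x ∂μ) * a i) i₀]
      ring
    intro i
    rcases eq_or_ne i i₀ with rfl | hne
    · -- the dropped coordinate
      have step1 : (∑ j, w j * f i (pts' j).val) * a i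
          = L c - ∑ i', (∫ x, f (i.succAbove i') x ∂μ) * a (i.succAbove i') := by
        rw [Finset.sum_mul]
        have : ∀ j, w j * f i (pts' j).val * a i
            = w j * L c - ∑ i', w j * (f (i.succAbove i') (pts' j).val * a (i.succAbove i')) := by
          intro j
          rw [mul_assoc, hrel (pts' j), mul_sub, Finset.mul_sum]
        rw [Finset.sum_congr rfl fun j _ => this j]
        rw [Finset.sum_sub_distrib, ← Finset.sum_mul, hw1, one_mul]
        congr 1
        rw [Finset.sum_comm]
        congr 1
        ext i'
        have h1 : ∑ j, w j * (f (i.succAbove i') (pts' j).val * a (i.succAbove i'))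
            = (∑ j, w j * f (i.succAbove i') (pts' j).val) * a (i.succAbove i') := by
          rw [Finset.sum_mul]
          congr 1
          ext j
          ring
        have h2 := hsum i'
        simp only [hf'] at h2
        rw [h1, h2, hIntEq (i.succAbove i')]
      have := step1.trans hrelInt.symm
      exact mul_right_cancel₀ hi₀ this
    · -- a kept coordinate
      obtain ⟨i', rfl⟩ := Fin.exists_succAbove_eq hne
      have h2 := hsum i'
      simp only [hf'] at h2
      rw [h2, hIntEq (i₀.succAbove i')]

end aux

/-- Barycenter lemma: given a probability measure `μ` and `μ`-integrable measurable
functions `f₁,...,f_m`, there is a finitely supported probability measure (a finite convex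
combination of Dirac masses) matching all the integrals `∫ f_i dμ`. -/
theorem stmt_17 {X : Type*} [MeasurableSpace X] (μ : Measure X) [IsProbabilityMeasure μ]
    (m : ℕ) (f : Fin m → X → ℝ)
    (hmeas : ∀ i, Measurable (f i)) (hint : ∀ i, Integrable (f i) μ) :
    ∃ (n : ℕ) (w : Fin n → ℝ) (pts : Fin n → X),
      (∀ j, 0 ≤ w j) ∧ (∑ j, w j = 1) ∧
      ∀ i, ∫ x, f i x ∂(∑ j, (ENNReal.ofReal (w j)) • Measure.dirac (pts j))
        = ∫ x, f i x ∂μ := by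
  obtain ⟨n, w, pts, hw0, hw1, hsum⟩ := barycenter_aux m μ f hmeas hint
  refine ⟨n, w, pts, hw0, hw1, fun i => ?_⟩
  have hdint : ∀ j : Fin n, Integrable (f i) ((ENNReal.ofReal (w j)) • Measure.dirac (pts j)) := by
    intro j
    have h1 : Integrable (f i) (Measure.dirac (pts j)) :=
      (integrable_const (f i (pts j))).congr ((MeasureTheory.ae_eq_dirac' (hmeas i)).symm)
    exact h1.smul_measure ENNReal.ofReal_ne_top
  rw [integral_finset_sum_measure (fun j _ => hdint j)]
  have hval : ∀ j, ∫ x, f i x ∂((ENNReal.ofReal (w j)) • Measure.dirac (pts j))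
      = w j * f i (pts j) := by
    intro j
    rw [integral_smul_measure, integral_dirac' _ _ (hmeas i).stronglyMeasurable,
      ENNReal.toReal_ofReal (hw0 j), smul_eq_mul]
  rw [Finset.sum_congr rfl fun j _ => hval j]
  exact hsum i
end

section
/- Let Φ = {g₁,...,g_d} be a finite set of measurable functions on X, P = {μ probability : each g_i is μ-integrable and ∫ g_i dμ ≤ 0}, and P̃ = {μ probability : ∫ g_i⁺ dμ < ∞ and ∫ g_i dμ ∈ [-∞,0] for all i}. Then every e-variable for P is an e-variable for P̃; i.e., if h : X → [0,∞] is measurable with ∫ h dμ ≤ 1 for all μ ∈ P, then ∫ h dμ ≤ 1 for all μ ∈ P̃. -/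
open MeasureTheory
open scoped ENNReal


theorem integral_mem_convexHull_range {X : Type*} [MeasurableSpace X]
    {E : Type*} [NormedAddCommGroup E] [InnerProductSpace ℝ E] [FiniteDimensional ℝ E]
    [MeasurableSpace E] [BorelSpace E]
    (μ : Measure X) [IsProbabilityMeasure μ]
    {f : X → E} (hfm : Measurable f) (hfi : Integrable f μ) :
    (∫ x, f x ∂μ) ∈ convexHull ℝ (Set.range f) := by
  set m := ∫ x, f x ∂μ with hm
  suffices H : ∀ (n : ℕ) (W : Submodule ℝ E), Module.finrank ℝ W ≤ n →
      ∀ (s : Set X), MeasurableSet s → μ s = 1 → (∀ x ∈ s, f x - m ∈ W) →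
      m ∈ convexHull ℝ (f '' s) by
    have := H (Module.finrank ℝ E) ⊤ (by simp) Set.univ MeasurableSet.univ (by simp)
      (fun x _ => Submodule.mem_top)
    simpa [Set.image_univ] using this
  intro n
  induction n with
  | zero =>
    intro W hWn s hs hs1 hW
    have hW0 : W = ⊥ := Submodule.finrank_eq_zero.mp (le_antisymm hWn (Nat.zero_le _))
    obtain ⟨x0, hx0⟩ : s.Nonempty := nonempty_of_measure_ne_zero (by rw [hs1]; exact one_ne_zero)
    have hfx : f x0 = m := by
      have := hW x0 hx0
      rw [hW0, Submodule.mem_bot, sub_eq_zero] at this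
      exact this
    exact subset_convexHull ℝ _ ⟨x0, hx0, hfx⟩
  | succ n ih =>
    intro W hWn s hs hs1 hW
    by_cases hmem : m ∈ convexHull ℝ (f '' s)
    · exact hmem
    have hsne : s.Nonempty := nonempty_of_measure_ne_zero (by rw [hs1]; exact one_ne_zero)
    obtain ⟨x0, hx0s⟩ := hsne
    set P : E →L[ℝ] W := Submodule.orthogonalProjectionOnto W with hP
    set g : X → W := fun x => P (f x - m) with hgdef
    have hgm : Measurable g := P.continuous.measurable.comp (hfm.sub measurable_const)
    have hfmi : Integrable (fun x => f x - m) μ := hfi.sub (integrable_const m)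
    have hgi : Integrable g μ := P.integrable_comp hfmi
    have hgint : ∫ x, g x ∂μ = 0 := by
      have h1 : ∫ x, g x ∂μ = P (∫ x, (f x - m) ∂μ) := P.integral_comp_comm hfmi
      have h2 : ∫ x, (f x - m) ∂μ = 0 := by
        rw [integral_sub hfi (integrable_const m), integral_const]
        simp [hm]
      rw [h1, h2, map_zero]
    have hgs : ∀ x ∈ s, ((g x : E)) = f x - m := fun x hx =>
      (Submodule.starProjection_eq_self_iff (K := W)).mpr (hW x hx)
    set C := convexHull ℝ (g '' s) with hC
    have hCc : Convex ℝ C := convex_convexHull ℝ _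
    have hC0 : (0 : W) ∉ C := by
      intro h0
      apply hmem
      rw [hC, convexHull_eq] at h0
      obtain ⟨ι, t, w, z, hw0, hw1, hzs, hcc⟩ := h0
      rw [Finset.centerMass_eq_of_sum_1 _ _ hw1] at hcc
      have hz' : ∀ i : ι, ∃ x, (i ∈ t → x ∈ s ∧ g x = z i) := by
        intro i
        by_cases hi : i ∈ t
        · obtain ⟨x, hx, hgx⟩ := hzs i hi
          exact ⟨x, fun _ => ⟨hx, hgx⟩⟩
        · exact ⟨x0, fun h => absurd h hi⟩
      choose xx hxx using hz'
      rw [convexHull_eq]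
      refine ⟨ι, t, w, fun i => f (xx i), hw0, hw1, fun i hi => ⟨xx i, (hxx i hi).1, rfl⟩, ?_⟩
      rw [Finset.centerMass_eq_of_sum_1 _ _ hw1]
      have e1 : ∀ i ∈ t, f (xx i) = ((z i : E)) + m := by
        intro i hi
        rw [← (hxx i hi).2, hgs _ (hxx i hi).1]
        abel
      calc ∑ i ∈ t, w i • f (xx i) = ∑ i ∈ t, (w i • ((z i : E)) + w i • m) := by
            refine Finset.sum_congr rfl fun i hi => ?_
            rw [e1 i hi, smul_add]
        _ = (∑ i ∈ t, w i • ((z i : E))) + (∑ i ∈ t, w i) • m := by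
            rw [Finset.sum_add_distrib, Finset.sum_smul]
        _ = m := by
            have : ∑ i ∈ t, w i • ((z i : E)) = 0 := by
              have := congrArg (W.subtype) hcc
              simpa [map_sum, _root_.map_smul] using this
            rw [this, hw1, zero_add, one_smul]
    have hsae : ∀ᵐ x ∂μ, x ∈ s := by
      have hcmp : μ sᶜ = 0 := by
        rw [measure_compl hs (measure_ne_top μ s), hs1, measure_univ, tsub_self]
      rw [ae_iff]
      exact hcmp
    have h0cl : (0 : W) ∈ closure C := by
      have hmem' : ∀ᵐ x ∂μ, g x ∈ closure C :=
        hsae.mono fun x hx => subset_closure (subset_convexHull ℝ _ ⟨x, hx, rfl⟩)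
      have := hCc.closure.integral_mem isClosed_closure hmem' hgi
      rwa [hgint] at this
    by_cases hspan : affineSpan ℝ (g '' s) = ⊤
    · have hint : (interior C).Nonempty := by
        rw [hCc.interior_nonempty_iff_affineSpan_eq_top, hC, affineSpan_convexHull]
        exact hspan
      obtain ⟨ℓ, hℓ⟩ := geometric_hahn_banach_open_point hCc.interior isOpen_interior
        (fun hc => hC0 (interior_subset hc))
      simp only [map_zero] at hℓ
      obtain ⟨y, hy⟩ := hint
      have hℓy : ℓ y < 0 := hℓ y hy
      have hℓC : ∀ c ∈ C, ℓ c ≤ 0 := by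
        intro c hc
        have hseg : ∀ t : ℝ, t ∈ Set.Ioo (0:ℝ) 1 → ℓ ((1 - t) • c + t • y) < 0 := by
          intro t ht
          refine hℓ _ (hCc.openSegment_self_interior_subset_interior hc hy ?_)
          exact ⟨1 - t, t, by linarith [ht.1, ht.2], ht.1, by ring, rfl⟩
        have tend : Filter.Tendsto (fun t : ℝ => ℓ ((1 - t) • c + t • y))
            (nhdsWithin 0 (Set.Ioo 0 1)) (nhds (ℓ c)) := by
          have hcont : Continuous fun t : ℝ => ℓ ((1 - t) • c + t • y) := by fun_prop
          have h0 : ℓ ((1 - (0:ℝ)) • c + (0:ℝ) • y) = ℓ c := by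
            norm_num
          exact h0 ▸ (hcont.tendsto 0).mono_left nhdsWithin_le_nhds
        haveI : (nhdsWithin (0:ℝ) (Set.Ioo 0 1)).NeBot := by
          apply mem_closure_iff_nhdsWithin_neBot.mp
          rw [closure_Ioo (by norm_num : (0:ℝ) ≠ 1)]
          exact Set.left_mem_Icc.mpr zero_le_one
        exact le_of_tendsto tend
          (Filter.eventually_of_mem self_mem_nhdsWithin fun t ht => (hseg t ht).le)
      have hgle : ∀ x ∈ s, ℓ (g x) ≤ 0 := fun x hx =>
        hℓC _ (subset_convexHull ℝ _ ⟨x, hx, rfl⟩)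
      have hin : Integrable (fun x => -ℓ (g x)) μ := (ℓ.integrable_comp hgi).neg
      have hint0 : ∫ x, (-ℓ (g x)) ∂μ = 0 := by
        have h1 : ∫ x, ℓ (g x) ∂μ = ℓ (∫ x, g x ∂μ) := ℓ.integral_comp_comm hgi
        rw [integral_neg, h1, hgint, map_zero, neg_zero]
      have hae0 : (fun x => -ℓ (g x)) =ᵐ[μ] 0 :=
        (integral_eq_zero_iff_of_nonneg_ae
          (hsae.mono fun x hx => neg_nonneg.2 (hgle x hx)) hin).mp hint0
      set s' := s ∩ {x | ℓ (g x) = 0} with hs'def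
      have hs'm : MeasurableSet s' :=
        hs.inter ((ℓ.continuous.measurable.comp hgm) (measurableSet_singleton 0))
      have hs'ae : ∀ᵐ x ∂μ, x ∈ s' := by
        filter_upwards [hsae, hae0] with x hx h0x
        refine ⟨hx, ?_⟩
        have : -ℓ (g x) = 0 := h0x
        simpa [neg_eq_zero] using this
      have hs'1 : μ s' = 1 := by
        have hc : μ s'ᶜ = 0 := by
          have := ae_iff.mp hs'ae
          exact this
        rw [measure_compl hs'm (measure_ne_top _ _), measure_univ] at hc
        have h1 : μ s' ≤ 1 := prob_le_one
        have := tsub_eq_zero_iff_le.mp hc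
        exact le_antisymm h1 this
      set K := LinearMap.ker (ℓ : ↥W →ₗ[ℝ] ℝ) with hK
      have hKlt : K < ⊤ := by
        rw [lt_top_iff_ne_top]
        intro hKt
        have : ℓ y = 0 := by
          have : y ∈ K := hKt ▸ Submodule.mem_top
          simpa [hK, LinearMap.mem_ker] using this
        linarith
      have hKr : Module.finrank ℝ K < Module.finrank ℝ W := Submodule.finrank_lt hKlt.ne
      refine convexHull_mono (Set.image_mono Set.inter_subset_left)
        (ih (K.map W.subtype) ?_ s' hs'm hs'1 ?_)
      · rw [Submodule.finrank_map_subtype_eq]; omega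
      · intro x hx
        have hgx : g x ∈ K := by simpa [hK, LinearMap.mem_ker] using hx.2
        have := hgs x hx.1
        exact this ▸ Submodule.mem_map_of_mem hgx
    · set A := affineSpan ℝ (g '' s) with hA
      have h0A : (0 : W) ∈ A := by
        have hCA : closure C ⊆ (A : Set ↥W) := by
          refine closure_minimal ?_ A.closed_of_finiteDimensional
          rw [hC]; exact convexHull_subset_affineSpan _
        exact hCA h0cl
      have hdir : ∀ x ∈ s, g x ∈ A.direction := by
        intro x hx
        have hgA : g x ∈ A := subset_affineSpan ℝ _ ⟨x, hx, rfl⟩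
        simpa [vsub_eq_sub] using AffineSubspace.vsub_mem_direction hgA h0A
      have hAd : A.direction < ⊤ := by
        rw [lt_top_iff_ne_top]
        intro hdt
        exact hspan ((AffineSubspace.direction_eq_top_iff_of_nonempty ⟨0, h0A⟩).mp hdt)
      have hAr : Module.finrank ℝ A.direction < Module.finrank ℝ W := Submodule.finrank_lt hAd.ne
      refine ih (A.direction.map W.subtype) ?_ s hs hs1 ?_
      · rw [Submodule.finrank_map_subtype_eq]; omega
      · intro x hx
        exact (hgs x hx) ▸ Submodule.mem_map_of_mem (hdir x hx)

lemma ennnorm_eq_ofReal_add_ofReal (a : ℝ) :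
    (‖a‖₊ : ℝ≥0∞) = ENNReal.ofReal a + ENNReal.ofReal (-a) := by
  rcases le_or_gt 0 a with ha | ha
  · rw [ENNReal.ofReal_eq_zero.mpr (by linarith : -a ≤ 0), add_zero]
    rw [← Real.enorm_eq_ofReal ha]
    exact (enorm_eq_nnnorm _).symm
  · rw [ENNReal.ofReal_eq_zero.mpr (by linarith : a ≤ 0), zero_add]
    rw [← Real.enorm_eq_ofReal (by linarith : 0 ≤ -a)]
    simp [nnnorm_neg]
    exact (enorm_eq_nnnorm _).symm

lemma exists_dominating {X : Type*} [MeasurableSpace X] (μ : Measure X) [IsProbabilityMeasure μ]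
    {gi : X → ℝ} (hgm : Measurable gi)
    (hpos : ∫⁻ x, ENNReal.ofReal (gi x) ∂μ ≠ ⊤)
    (hle : ∫⁻ x, ENNReal.ofReal (gi x) ∂μ ≤ ∫⁻ x, ENNReal.ofReal (-(gi x)) ∂μ) :
    ∃ G : X → ℝ, Measurable G ∧ Integrable G μ ∧ (∫ x, G x ∂μ) ≤ 0 ∧ ∀ x, gi x ≤ G x := by
  by_cases hneg : ∫⁻ x, ENNReal.ofReal (-(gi x)) ∂μ = ⊤
  · -- truncate below
    have hsup : (⨆ c : ℕ, ∫⁻ x, min (ENNReal.ofReal (-(gi x))) c ∂μ) = ⊤ := by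
      rw [← lintegral_iSup (f := fun c x => min (ENNReal.ofReal (-(gi x))) c) (fun c => (hgm.neg.ennreal_ofReal).min measurable_const)
        (fun c c' hcc' x => min_le_min le_rfl (Nat.cast_le.2 hcc'))]
      rw [← hneg]
      refine lintegral_congr fun x => ?_
      refine le_antisymm (iSup_le fun c => min_le_left _ _) ?_
      rcases eq_or_ne (ENNReal.ofReal (-(gi x))) ⊤ with htop | htop
      · exact absurd htop ENNReal.ofReal_ne_top
      · obtain ⟨c, hc⟩ := ENNReal.exists_nat_gt htop
        exact le_trans (le_of_eq (min_eq_left hc.le).symm) (le_iSup (fun c : ℕ =>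
          min (ENNReal.ofReal (-(gi x))) c) c)
    have : (∫⁻ x, ENNReal.ofReal (gi x) ∂μ) <
        ⨆ c : ℕ, ∫⁻ x, min (ENNReal.ofReal (-(gi x))) c ∂μ := by
      rw [hsup]; exact lt_top_iff_ne_top.2 hpos
    obtain ⟨c, hc⟩ := lt_iSup_iff.mp this
    have hofG : ∀ x, ENNReal.ofReal (max (gi x) (-(c:ℝ))) = ENNReal.ofReal (gi x) := by
      intro x
      rcases le_or_gt (-(c:ℝ)) (gi x) with hx | hx
      · rw [max_eq_left hx]
      · rw [max_eq_right hx.le,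
          ENNReal.ofReal_eq_zero.mpr (neg_nonpos.mpr (Nat.cast_nonneg c)),
          ENNReal.ofReal_eq_zero.mpr (by linarith [Nat.cast_nonneg (α := ℝ) c] : gi x ≤ 0)]
    have hofnG : ∀ x, ENNReal.ofReal (-(max (gi x) (-(c:ℝ)))) =
        min (ENNReal.ofReal (-(gi x))) c := by
      intro x
      rcases le_or_gt (-(c:ℝ)) (gi x) with hx | hx
      · rw [max_eq_left hx, min_eq_left]
        rw [← ENNReal.ofReal_natCast c]
        exact ENNReal.ofReal_le_ofReal (by linarith)
      · rw [max_eq_right hx.le, neg_neg, min_eq_right]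
        · simp [ENNReal.ofReal_natCast]
        · rw [← ENNReal.ofReal_natCast c]
          exact ENNReal.ofReal_le_ofReal (by linarith)
    have hlim : ∫⁻ x, min (ENNReal.ofReal (-(gi x))) c ∂μ ≤ c := by
      calc ∫⁻ x, min (ENNReal.ofReal (-(gi x))) c ∂μ ≤ ∫⁻ _, (c : ℝ≥0∞) ∂μ :=
            lintegral_mono fun x => min_le_right _ _
        _ = c := by simp
    have hGi : Integrable (fun x => max (gi x) (-(c:ℝ))) μ := by
      refine ⟨(hgm.max measurable_const).aestronglyMeasurable, ?_⟩
      rw [hasFiniteIntegral_def]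
      calc ∫⁻ x, (‖max (gi x) (-(c:ℝ))‖₊ : ℝ≥0∞) ∂μ
          = ∫⁻ x, (ENNReal.ofReal (gi x) + min (ENNReal.ofReal (-(gi x))) c) ∂μ := by
            refine lintegral_congr fun x => ?_
            rw [ennnorm_eq_ofReal_add_ofReal, hofG, hofnG]
        _ = (∫⁻ x, ENNReal.ofReal (gi x) ∂μ) + ∫⁻ x, min (ENNReal.ofReal (-(gi x))) c ∂μ :=
            lintegral_add_left hgm.ennreal_ofReal _
        _ < ⊤ := ENNReal.add_lt_top.mpr ⟨lt_top_iff_ne_top.2 hpos,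
            lt_of_le_of_lt hlim (ENNReal.natCast_lt_top c)⟩
    refine ⟨fun x => max (gi x) (-(c : ℝ)), hgm.max measurable_const, hGi, ?_,
      fun x => le_max_left _ _⟩
    rw [integral_eq_lintegral_pos_part_sub_lintegral_neg_part hGi]
    rw [sub_nonpos]
    have e1 : ∫⁻ x, ENNReal.ofReal (max (gi x) (-(c:ℝ))) ∂μ = ∫⁻ x, ENNReal.ofReal (gi x) ∂μ :=
      lintegral_congr hofG
    have e2 : ∫⁻ x, ENNReal.ofReal (-(max (gi x) (-(c:ℝ)))) ∂μ
        = ∫⁻ x, min (ENNReal.ofReal (-(gi x))) c ∂μ := lintegral_congr hofnG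
    rw [e1, e2]
    refine (ENNReal.toReal_le_toReal hpos
      (lt_of_le_of_lt hlim (ENNReal.natCast_lt_top c)).ne).mpr hc.le
  · -- integrable case
    have hInt : Integrable gi μ := by
      refine ⟨hgm.aestronglyMeasurable, ?_⟩
      rw [hasFiniteIntegral_def]
      calc ∫⁻ x, (‖gi x‖₊ : ℝ≥0∞) ∂μ
          = ∫⁻ x, (ENNReal.ofReal (gi x) + ENNReal.ofReal (-(gi x))) ∂μ :=
            lintegral_congr fun x => ennnorm_eq_ofReal_add_ofReal _
        _ = (∫⁻ x, ENNReal.ofReal (gi x) ∂μ) + ∫⁻ x, ENNReal.ofReal (-(gi x)) ∂μ :=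
            lintegral_add_left hgm.ennreal_ofReal _
        _ < ⊤ := ENNReal.add_lt_top.mpr ⟨lt_top_iff_ne_top.2 hpos, lt_top_iff_ne_top.2 hneg⟩
    refine ⟨gi, hgm, hInt, ?_, fun x => le_rfl⟩
    rw [integral_eq_lintegral_pos_part_sub_lintegral_neg_part hInt, sub_nonpos]
    exact (ENNReal.toReal_le_toReal hpos hneg).mpr hle

/-- For a finite constraint set `Φ = {g₁,...,g_d}`, every e-variable for the generated
hypothesis `P` is also an e-variable for the relaxed hypothesis `P̃`, in which each `g_i`
is only required to have integrable positive part and extended integral in `[-∞,0]`. -/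
theorem stmt_18 {X : Type*} [MeasurableSpace X] (d : ℕ) (g : Fin d → X → ℝ)
    (hg : ∀ i, Measurable (g i))
    (h : X → ℝ≥0∞) (hh : Measurable h)
    (hE : ∀ μ : Measure X, IsProbabilityMeasure μ →
      (∀ i, Integrable (g i) μ ∧ ∫ x, g i x ∂μ ≤ 0) → ∫⁻ x, h x ∂μ ≤ 1) :
    ∀ μ : Measure X, IsProbabilityMeasure μ →
      (∀ i, (∫⁻ x, ENNReal.ofReal (g i x) ∂μ ≠ ⊤) ∧
        ∫⁻ x, ENNReal.ofReal (g i x) ∂μ ≤ ∫⁻ x, ENNReal.ofReal (-(g i x)) ∂μ) →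
      ∫⁻ x, h x ∂μ ≤ 1 := by
  intro μ hμ hcon
  classical
  haveI := hμ
  haveI : Nonempty X := by
    rcases isEmpty_or_nonempty X with hX | hX
    · exfalso
      have h1 : μ Set.univ = 1 := measure_univ
      rw [Set.univ_eq_empty_iff.mpr hX, measure_empty] at h1
      exact zero_ne_one h1
    · exact hX
  have main : ∀ n : ℕ, (∫⁻ x, min (h x) n ∂μ) ≤ 1 := by
    intro n
    have hGex : ∀ i, ∃ G : X → ℝ, Measurable G ∧ Integrable G μ ∧ (∫ x, G x ∂μ) ≤ 0 ∧
        ∀ x, g i x ≤ G x :=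
      fun i => exists_dominating μ (hg i) (hcon i).1 (hcon i).2
    choose G hGm hGi hGint hGle using hGex
    set H : X → ℝ := fun x => (min (h x) (n:ℝ≥0∞)).toReal with hHdef
    have hHm : Measurable H := (hh.min measurable_const).ennreal_toReal
    have hHnn : ∀ x, 0 ≤ H x := fun _ => ENNReal.toReal_nonneg
    have hmintop : ∀ x, min (h x) (n:ℝ≥0∞) ≠ ⊤ := fun x =>
      (lt_of_le_of_lt (min_le_right _ _) (ENNReal.natCast_lt_top n)).ne
    have hofH : ∀ x, ENNReal.ofReal (H x) = min (h x) n := fun x =>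
      ENNReal.ofReal_toReal (hmintop x)
    have hHb : ∀ x, ‖H x‖ ≤ (n:ℝ) := by
      intro x
      rw [Real.norm_of_nonneg (hHnn x), hHdef]
      calc (min (h x) (n:ℝ≥0∞)).toReal ≤ ((n:ℝ≥0∞)).toReal :=
            ENNReal.toReal_mono (ENNReal.natCast_ne_top n) (min_le_right _ _)
        _ = n := by simp
    have hHi : Integrable H μ :=
      ⟨hHm.aestronglyMeasurable, HasFiniteIntegral.of_bounded (ae_of_all _ hHb)⟩
    -- vector-valued function
    set F0 : X → (Option (Fin d)) → ℝ := fun x j => j.elim (H x) (fun i => G i x) with hF0def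
    have hF0m : ∀ j, Measurable fun x => F0 x j := by
      rintro (_ | i)
      · exact hHm
      · exact hGm i
    have hF0i : ∀ j, Integrable (fun x => F0 x j) μ := by
      rintro (_ | i)
      · exact hHi
      · exact hGi i
    have hF0meas : Measurable F0 := measurable_pi_lambda _ hF0m
    have hF0int : Integrable F0 μ := by
      have hb : ∀ᵐ x ∂μ, ‖F0 x‖ ≤ |H x| + ∑ i, |G i x| := by
        refine ae_of_all _ fun x => ?_
        have hnn : (0:ℝ) ≤ |H x| + ∑ i, |G i x| := by positivity
        rw [pi_norm_le_iff_of_nonneg hnn]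
        rintro (_ | i)
        · calc ‖F0 x none‖ = |H x| := rfl
            _ ≤ _ := le_add_of_nonneg_right (by positivity)
        · calc ‖F0 x (some i)‖ = |G i x| := rfl
            _ ≤ ∑ i, |G i x| := Finset.single_le_sum (f := fun i => |G i x|)
                (fun i _ => abs_nonneg _) (Finset.mem_univ i)
            _ ≤ _ := le_add_of_nonneg_left (by positivity)
      exact Integrable.mono'
        (hHi.abs.add (integrable_finset_sum _ (fun i _ => (hGi i).abs)))
        hF0meas.aestronglyMeasurable hb
    set L : ((Option (Fin d)) → ℝ) ≃L[ℝ] EuclideanSpace ℝ (Option (Fin d)) :=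
      (EuclideanSpace.equiv (Option (Fin d)) ℝ).symm with hL
    set F : X → EuclideanSpace ℝ (Option (Fin d)) := fun x => L (F0 x) with hFdef
    have hFm : Measurable F := L.continuous.measurable.comp hF0meas
    have hFi : Integrable F μ := (ContinuousLinearEquiv.integrable_comp_iff L).mpr hF0int
    have hcoord : ∀ j, EuclideanSpace.proj j (∫ x, F x ∂μ) = ∫ x, F0 x j ∂μ := by
      intro j
      rw [← (EuclideanSpace.proj j).integral_comp_comm hFi]
      rfl
    have hbar := integral_mem_convexHull_range μ hFm hFi
    rw [convexHull_eq] at hbar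
    obtain ⟨ι, t, w, z, hw0, hw1, hzs, hcc⟩ := hbar
    rw [Finset.centerMass_eq_of_sum_1 _ _ hw1] at hcc
    have hz' : ∀ k : ι, ∃ x : X, k ∈ t → F x = z k := by
      intro k
      by_cases hk : k ∈ t
      · obtain ⟨x, hx⟩ := hzs k hk
        exact ⟨x, fun _ => hx⟩
      · exact ⟨Classical.arbitrary X, fun hkt => absurd hkt hk⟩
    choose xx hxx using hz'
    have hsum : ∀ j, ∑ k ∈ t, w k * F0 (xx k) j = ∫ x, F0 x j ∂μ := by
      intro j
      have hc := congrArg (EuclideanSpace.proj j) hcc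
      rw [map_sum] at hc
      rw [← hcoord j, ← hc]
      refine Finset.sum_congr rfl fun k hk => ?_
      rw [← hxx k hk]
      rfl
    set ν : Measure X := ∑ k ∈ t, ENNReal.ofReal (w k) • Measure.dirac (xx k) with hν
    have hν_lint : ∀ (φ : X → ℝ≥0∞), Measurable φ →
        ∫⁻ x, φ x ∂ν = ∑ k ∈ t, ENNReal.ofReal (w k) * φ (xx k) := by
      intro φ hφ
      rw [hν, lintegral_finset_sum_measure]
      refine Finset.sum_congr rfl fun k _ => ?_
      rw [lintegral_smul_measure, lintegral_dirac' _ hφ, smul_eq_mul]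
    haveI hνp : IsProbabilityMeasure ν := by
      constructor
      rw [hν, Measure.finset_sum_apply]
      have heach : ∀ k ∈ t, (ENNReal.ofReal (w k) • Measure.dirac (xx k)) Set.univ
          = ENNReal.ofReal (w k) := by
        intro k _
        simp
      rw [Finset.sum_congr rfl heach, ← ENNReal.ofReal_sum_of_nonneg hw0, hw1,
        ENNReal.ofReal_one]
    have hνint : ∀ (f : X → ℝ), Measurable f → Integrable f ν := by
      intro f hf
      refine ⟨hf.aestronglyMeasurable, ?_⟩
      rw [hasFiniteIntegral_def, hν_lint _ hf.enorm]
      exact ENNReal.sum_lt_top.mpr fun k _ =>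
        ENNReal.mul_lt_top ENNReal.ofReal_lt_top enorm_lt_top
    have hνeq : ∀ (f : X → ℝ), Measurable f → ∫ x, f x ∂ν = ∑ k ∈ t, w k * f (xx k) := by
      intro f hf
      rw [hν, integral_finset_sum_measure (fun k _ => ?_)]
      · refine Finset.sum_congr rfl fun k hk => ?_
        rw [integral_smul_measure, integral_dirac' _ _ hf.stronglyMeasurable,
          ENNReal.toReal_ofReal (hw0 k hk), smul_eq_mul]
      · refine ⟨hf.aestronglyMeasurable, ?_⟩
        rw [hasFiniteIntegral_def, lintegral_smul_measure,
          lintegral_dirac' _ hf.enorm]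
        exact ENNReal.mul_lt_top ENNReal.ofReal_lt_top enorm_lt_top
    have hνE : ∫⁻ x, h x ∂ν ≤ 1 := by
      refine hE ν hνp fun i => ⟨hνint _ (hg i), ?_⟩
      rw [hνeq _ (hg i)]
      have hle : ∑ k ∈ t, w k * g i (xx k) ≤ ∑ k ∈ t, w k * F0 (xx k) (some i) :=
        Finset.sum_le_sum fun k hk =>
          mul_le_mul_of_nonneg_left (hGle i (xx k)) (hw0 k hk)
      exact le_trans hle ((hsum (some i)).le.trans (hGint i))
    calc ∫⁻ x, min (h x) n ∂μ
        = ∫⁻ x, ENNReal.ofReal (H x) ∂μ := lintegral_congr fun x => (hofH x).symm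
      _ = ENNReal.ofReal (∫ x, H x ∂μ) :=
          (ofReal_integral_eq_lintegral_ofReal hHi (ae_of_all _ hHnn)).symm
      _ = ENNReal.ofReal (∫ x, H x ∂ν) := by
          have hs0 : ∑ k ∈ t, w k * H (xx k) = ∫ x, H x ∂μ := hsum none
          rw [hνeq _ hHm, hs0]
      _ = ∫⁻ x, ENNReal.ofReal (H x) ∂ν :=
          ofReal_integral_eq_lintegral_ofReal (hνint _ hHm) (ae_of_all _ hHnn)
      _ = ∫⁻ x, min (h x) n ∂ν := lintegral_congr fun x => hofH x
      _ ≤ ∫⁻ x, h x ∂ν := lintegral_mono fun x => min_le_left _ _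
      _ ≤ 1 := hνE
  have hrw : ∫⁻ x, h x ∂μ = ⨆ n : ℕ, ∫⁻ x, min (h x) n ∂μ := by
    rw [← lintegral_iSup (fun n => hh.min measurable_const)
      (fun a b hab x => min_le_min le_rfl (Nat.cast_le.2 hab))]
    refine lintegral_congr fun x => ?_
    refine le_antisymm ?_ (iSup_le fun c => min_le_left _ _)
    rcases eq_or_ne (h x) ⊤ with htop | htop
    · rw [htop]
      have hminc : ∀ c : ℕ, min (⊤:ℝ≥0∞) (c:ℝ≥0∞) = c := fun c => min_eq_right le_top
      simp only [hminc]
      rw [ENNReal.iSup_natCast]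
    · obtain ⟨c, hc⟩ := ENNReal.exists_nat_gt htop
      exact le_trans (le_of_eq (min_eq_left hc.le).symm)
        (le_iSup (fun c : ℕ => min (h x) c) c)
  rw [hrw]
  exact iSup_le main
end

section
/- There exists a countable constraint set Φ on X = ℕ such that the generated hypothesis P(Φ) is a singleton {μ} with μ({x}) = 2^{-x}, but after adding the negative constraint function f₀(x) = -2^x, the generated hypothesis P(Φ ∪ {f₀}) is empty. Concretely: with f_n(x) = 1 for x ≠ n and f_n(n) = 1 - 2^n, the only probability measure μ on ℕ with ∫ f_n dμ ≤ 0 for all n ∈ ℕ is μ = Σ_x 2^{-x} δ_x, and this μ satisfies ∫ 2^x dμ = ∞, so no probability measure integrates f₀ and satisfies all constraints. -/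
open MeasureTheory
open scoped ENNReal

/-- Every subset of `ℕ+` is measurable. -/
instance : MeasurableSpace ℕ+ := ⊤

instance : MeasurableSingletonClass ℕ+ :=
  ⟨fun _ => MeasurableSpace.measurableSet_top⟩

lemma geom_sum_pnat : ∑' x : ℕ+, (2⁻¹ : ℝ≥0∞) ^ (x : ℕ) = 1 := by
  rw [← Equiv.pnatEquivNat.symm.tsum_eq]
  have : ∀ n : ℕ, (2⁻¹ : ℝ≥0∞) ^ ((Equiv.pnatEquivNat.symm n : ℕ+) : ℕ)
      = (2⁻¹ : ℝ≥0∞) ^ n * 2⁻¹ := by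
    intro n
    simp [Equiv.pnatEquivNat, Nat.succPNat, pow_succ]
  rw [tsum_congr this, ENNReal.tsum_mul_right, ENNReal.tsum_geometric,
    ENNReal.one_sub_inv_two, inv_inv, mul_comm]
  exact ENNReal.inv_mul_cancel two_ne_zero ENNReal.ofNat_ne_top

lemma key (μ : Measure ℕ+) (hp : IsProbabilityMeasure μ)
    (h : ∀ n : ℕ+, Integrable (fun x : ℕ+ => if x = n then (1 : ℝ) - 2 ^ (n : ℕ) else 1) μ ∧
        ∫ x, (if x = n then (1 : ℝ) - 2 ^ (n : ℕ) else 1) ∂μ ≤ 0) :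
    (∀ x : ℕ+, μ {x} = 2⁻¹ ^ (x : ℕ)) ∧
      ∫⁻ x, ENNReal.ofReal ((2 : ℝ) ^ (x : ℕ)) ∂μ = ⊤ := by
  have hofReal : ∀ n : ℕ, ENNReal.ofReal (((2 : ℝ) ^ n)⁻¹) = (2⁻¹ : ℝ≥0∞) ^ n := by
    intro n
    rw [← inv_pow, ENNReal.ofReal_pow (by norm_num), ENNReal.ofReal_inv_of_pos (by norm_num),
      ENNReal.ofReal_ofNat]
  have hle : ∀ n : ℕ+, (2⁻¹ : ℝ≥0∞) ^ (n : ℕ) ≤ μ {n} := by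
    intro n
    have hfun : (fun x : ℕ+ => if x = n then (1 : ℝ) - 2 ^ (n : ℕ) else 1)
        = fun x => 1 + ({n} : Set ℕ+).indicator (fun _ => -(2 : ℝ) ^ (n : ℕ)) x := by
      funext x
      by_cases hx : x = n <;> simp [hx, Set.indicator]
      ring
    have hs : MeasurableSet ({n} : Set ℕ+) := measurableSet_singleton n
    have hind : Integrable (({n} : Set ℕ+).indicator (fun _ => -(2 : ℝ) ^ (n : ℕ))) μ :=
      (integrable_const _).indicator hs
    have hint := (h n).2
    rw [hfun, integral_add (integrable_const 1) hind, integral_const,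
      integral_indicator_const _ hs] at hint
    simp only [Measure.real, hp.measure_univ, ENNReal.toReal_one, smul_eq_mul, one_smul, mul_neg] at hint
    -- hint : 1 + (μ {n}).toReal * (-(2^n)) ≤ 0 (roughly)
    have hpos : (0 : ℝ) < 2 ^ (n : ℕ) := by positivity
    have htr : ((2 : ℝ) ^ (n : ℕ))⁻¹ ≤ (μ {n}).toReal := by
      rw [inv_le_iff_one_le_mul₀ hpos]
      nlinarith [hint]
    have := ENNReal.ofReal_le_of_le_toReal htr
    rwa [hofReal] at this
  have hsum1 : ∑' x : ℕ+, μ {x} = 1 := by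
    have h1 : ∫⁻ _ : ℕ+, (1 : ℝ≥0∞) ∂μ = ∑' a : ℕ+, 1 * μ {a} :=
      lintegral_countable' _
    simpa [hp.measure_univ] using h1.symm
  have heq : ∀ x : ℕ+, μ {x} = 2⁻¹ ^ (x : ℕ) := by
    intro x
    by_contra hne
    have hlt : (2⁻¹ : ℝ≥0∞) ^ (x : ℕ) < μ {x} := lt_of_le_of_ne (hle x) fun e => hne e.symm
    have hlt2 : (1 : ℝ≥0∞) < 1 := by
      calc (1 : ℝ≥0∞) = ∑' x : ℕ+, (2⁻¹ : ℝ≥0∞) ^ (x : ℕ) := geom_sum_pnat.symm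
        _ < ∑' x : ℕ+, μ {x} := by
            refine ENNReal.tsum_lt_tsum ?_ hle hlt
            rw [geom_sum_pnat]; exact ENNReal.one_ne_top
        _ = 1 := hsum1
    exact lt_irrefl _ hlt2
  refine ⟨heq, ?_⟩
  rw [lintegral_countable']
  have hterm : ∀ x : ℕ+, ENNReal.ofReal ((2 : ℝ) ^ (x : ℕ)) * μ {x} = 1 := by
    intro x
    rw [heq x, ENNReal.ofReal_pow (by norm_num), ENNReal.ofReal_ofNat, ← mul_pow,
      ENNReal.mul_inv_cancel two_ne_zero ENNReal.ofNat_ne_top, one_pow]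
  rw [tsum_congr hterm]
  exact ENNReal.tsum_const_eq_top_of_ne_zero one_ne_zero

/-- On `X = ℕ = {1,2,...}`, with constraint functions `f_n(x) = 1` for `x ≠ n` and
`f_n(n) = 1 - 2ⁿ`, the only probability measure `μ` satisfying `∫ f_n dμ ≤ 0` for all `n`
is `μ = Σ_x 2^{-x} δ_x`; this `μ` satisfies `∫ 2^x dμ = ∞`, so after adding the negative
constraint `f₀(x) = -2^x` the generated hypothesis becomes empty. -/
theorem stmt_19 :
    (∀ μ : Measure ℕ+, IsProbabilityMeasure μ →
      (∀ n : ℕ+, Integrable (fun x : ℕ+ => if x = n then (1 : ℝ) - 2 ^ (n : ℕ) else 1) μ ∧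
        ∫ x, (if x = n then (1 : ℝ) - 2 ^ (n : ℕ) else 1) ∂μ ≤ 0) →
      (∀ x : ℕ+, μ {x} = 2⁻¹ ^ (x : ℕ)) ∧
        ∫⁻ x, ENNReal.ofReal ((2 : ℝ) ^ (x : ℕ)) ∂μ = ⊤) ∧
    ¬ ∃ μ : Measure ℕ+, IsProbabilityMeasure μ ∧
      (∀ n : ℕ+, Integrable (fun x : ℕ+ => if x = n then (1 : ℝ) - 2 ^ (n : ℕ) else 1) μ ∧
        ∫ x, (if x = n then (1 : ℝ) - 2 ^ (n : ℕ) else 1) ∂μ ≤ 0) ∧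
      Integrable (fun x : ℕ+ => -(2 : ℝ) ^ (x : ℕ)) μ ∧
      ∫ x, (-(2 : ℝ) ^ (x : ℕ)) ∂μ ≤ 0 := by
  refine ⟨fun μ hp h => key μ hp h, ?_⟩
  rintro ⟨μ, hp, h, hint, -⟩
  have htop := (key μ hp h).2
  have hfin : ∫⁻ x, (‖-(2 : ℝ) ^ (x : ℕ)‖₊ : ℝ≥0∞) ∂μ < ⊤ := hint.hasFiniteIntegral
  have : ∀ x : ℕ+, ((‖-(2 : ℝ) ^ (x : ℕ)‖₊ : ℝ≥0∞)) = ENNReal.ofReal ((2 : ℝ) ^ (x : ℕ)) := by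
    intro x
    rw [nnnorm_neg, ← enorm_eq_nnnorm, ← ofReal_norm, Real.norm_of_nonneg (by positivity)]
  rw [lintegral_congr (fun x => this x), htop] at hfin
  exact lt_irrefl _ hfin
end
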